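/- arXiv:2502.04006 — 3 statements merged into one kernel-verified Lean document; each statement's English description precedes it below -/
import Mathlib

section
/- Let K be a closed cone in ℝⁿ and V a nonempty finite subset of ℝⁿ, and set H(V) := ∑_{h ∈ V} hhᵀ. Then for every A ∈ CP(K), one has ⟨A, H(V)⟩ = 0 if and only if A ∈ CP(V^⊥ ∩ K), where V^⊥ = {x ∈ ℝⁿ : xᵀh = 0 for all h ∈ V}. -/
open Matrix
open scoped Pointwise

noncomputable section

/-- Frobenius inner product on real `n × n` matrices:
`⟨A,B⟩ = ∑ᵢⱼ Aᵢⱼ Bᵢⱼ`. -/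
def mip {n : ℕ} (A B : Matrix (Fin n) (Fin n) ℝ) : ℝ :=
  ∑ i, ∑ j, A i j * B i j

/-- `CPset S` (also used for `S₊(X)` when `S` is a subspace): the set of matrices of the
form `∑ᵢ aᵢaᵢᵀ` for a positive number of vectors `aᵢ ∈ S`. -/
def CPset {n : ℕ} (S : Set (Fin n → ℝ)) : Set (Matrix (Fin n) (Fin n) ℝ) :=
  {A | ∃ k : ℕ, 0 < k ∧ ∃ f : Fin k → (Fin n → ℝ),
        (∀ i, f i ∈ S) ∧ A = ∑ i, Matrix.vecMulVec (f i) (f i)}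

/-- `COPset K`: symmetric matrices `A` with `xᵀAx ≥ 0` for all `x ∈ K`. -/
def COPset {n : ℕ} (K : Set (Fin n → ℝ)) : Set (Matrix (Fin n) (Fin n) ℝ) :=
  {A | A.IsSymm ∧ ∀ x ∈ K, 0 ≤ x ⬝ᵥ A.mulVec x}

/-- `F` is a face of the convex cone `C`: a nonempty convex subcone such that
`a, b ∈ C`, `a + b ∈ F` imply `a, b ∈ F`. -/
def IsFaceOf {M : Type*} [AddCommMonoid M] [Module ℝ M] (C F : Set M) : Prop :=
  F.Nonempty ∧ F ⊆ C ∧ Convex ℝ F ∧ (∀ x ∈ F, ∀ c : ℝ, 0 ≤ c → c • x ∈ F) ∧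
    ∀ a ∈ C, ∀ b ∈ C, a + b ∈ F → a ∈ F ∧ b ∈ F

/-- Exposed face of a cone of matrices (w.r.t. the trace inner product). -/
def IsExposedFaceOf {n : ℕ} (C F : Set (Matrix (Fin n) (Fin n) ℝ)) : Prop :=
  IsFaceOf C F ∧ ∃ H : Matrix (Fin n) (Fin n) ℝ,
    (∀ A ∈ C, 0 ≤ mip H A) ∧ F = {A ∈ C | mip H A = 0}

/-- Dimension of a set: dimension of its linear span. -/
def setDim {M : Type*} [AddCommGroup M] [Module ℝ M] (S : Set M) : ℕ :=
  Module.finrank ℝ (Submodule.span ℝ S)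

/-- The ray `ℝ₊ • x`. -/
def rayOf {M : Type*} [AddCommMonoid M] [Module ℝ M] (x : M) : Set M :=
  {y | ∃ c : ℝ, 0 ≤ c ∧ y = c • x}

/-- An extreme ray: a one-dimensional face. -/
def IsExtremeRayOf {M : Type*} [AddCommGroup M] [Module ℝ M] (C F : Set M) : Prop :=
  IsFaceOf C F ∧ setDim F = 1

/-- The second-order cone `L^{m+1} = {x : x₀ ≥ ‖(x₁,…,xₘ)‖}`. -/
def soc (m : ℕ) : Set (Fin (m+1) → ℝ) :=
  {x | Real.sqrt (∑ i : Fin m, x i.succ ^ 2) ≤ x 0}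

/-- The boundary `∂L^{m+1} = {x : x₀ = ‖(x₁,…,xₘ)‖}`. -/
def socBd (m : ℕ) : Set (Fin (m+1) → ℝ) :=
  {x | Real.sqrt (∑ i : Fin m, x i.succ ^ 2) = x 0}

/-- The interior `int L^{m+1} = {x : x₀ > ‖(x₁,…,xₘ)‖}`. -/
def socInt (m : ℕ) : Set (Fin (m+1) → ℝ) :=
  {x | Real.sqrt (∑ i : Fin m, x i.succ ^ 2) < x 0}

/-- The matrix `J = diag(1, −1, …, −1)`. -/
def Jmat (m : ℕ) : Matrix (Fin (m+1)) (Fin (m+1)) ℝ :=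
  Matrix.diagonal fun i => if i = 0 then 1 else -1

/-- The hyperplane `{x : x ⬝ u = 0}` as a submodule. -/
def perpHyp {n : ℕ} (u : Fin n → ℝ) : Submodule ℝ (Fin n → ℝ) where
  carrier := {x | x ⬝ᵥ u = 0}
  add_mem' := by
    intro a b ha hb
    simp only [Set.mem_setOf_eq, add_dotProduct] at *
    linarith
  zero_mem' := by simp [zero_dotProduct]
  smul_mem' := by
    intro c a ha
    simp only [Set.mem_setOf_eq, smul_dotProduct] at *
    simp [ha]

/-- A polyhedral cone: nonnegative combinations of finitely many vectors. -/
def IsPolyhedralCone {M : Type*} [AddCommMonoid M] [Module ℝ M] (S : Set M) : Prop :=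
  ∃ (k : ℕ) (g : Fin k → M),
    S = {x | ∃ c : Fin k → ℝ, (∀ i, 0 ≤ c i) ∧ x = ∑ i, c i • g i}

end


lemma mip_add_left {n : ℕ} (A B C : Matrix (Fin n) (Fin n) ℝ) :
    mip (A + B) C = mip A C + mip B C := by
  simp [mip, add_mul, Finset.sum_add_distrib]

lemma mip_sum_left {n : ℕ} {ι : Type*} (s : Finset ι) (M : ι → Matrix (Fin n) (Fin n) ℝ)
    (B : Matrix (Fin n) (Fin n) ℝ) :
    mip (∑ i ∈ s, M i) B = ∑ i ∈ s, mip (M i) B := by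
  induction s using Finset.cons_induction with
  | empty => simp [mip]
  | cons a s ha ih => simp [Finset.sum_cons, mip_add_left, ih]

lemma mip_add_right {n : ℕ} (A B C : Matrix (Fin n) (Fin n) ℝ) :
    mip A (B + C) = mip A B + mip A C := by
  simp [mip, mul_add, Finset.sum_add_distrib]

lemma mip_sum_right {n : ℕ} {ι : Type*} (s : Finset ι) (A : Matrix (Fin n) (Fin n) ℝ)
    (M : ι → Matrix (Fin n) (Fin n) ℝ) :
    mip A (∑ i ∈ s, M i) = ∑ i ∈ s, mip A (M i) := by
  induction s using Finset.cons_induction with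
  | empty => simp [mip]
  | cons a s ha ih => simp [Finset.sum_cons, mip_add_right, ih]

lemma mip_vecMulVec {n : ℕ} (a b : Fin n → ℝ) :
    mip (Matrix.vecMulVec a a) (Matrix.vecMulVec b b) = (a ⬝ᵥ b) ^ 2 := by
  simp only [mip, Matrix.vecMulVec_apply, dotProduct, sq, Finset.sum_mul_sum]
  apply Finset.sum_congr rfl; intro i _
  apply Finset.sum_congr rfl; intro j _
  ring

/-- For a closed cone `K ⊆ ℝⁿ`, a nonempty finite `V ⊆ ℝⁿ`, and
`A ∈ CP(K)`: `⟨A, H(V)⟩ = 0 ↔ A ∈ CP(V^⊥ ∩ K)`. -/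
theorem stmt0 (n : ℕ) (K : Set (Fin n → ℝ)) (hKcl : IsClosed K)
    (hKcone : ∀ x ∈ K, ∀ c : ℝ, 0 ≤ c → c • x ∈ K)
    (V : Finset (Fin n → ℝ)) (hV : V.Nonempty)
    (A : Matrix (Fin n) (Fin n) ℝ) (hA : A ∈ CPset K) :
    mip A (∑ h ∈ V, Matrix.vecMulVec h h) = 0 ↔
      A ∈ CPset ({x | ∀ h ∈ V, x ⬝ᵥ h = 0} ∩ K) := by
  obtain ⟨k, hk, f, hf, rfl⟩ := hA
  have key : mip (∑ i, Matrix.vecMulVec (f i) (f i)) (∑ h ∈ V, Matrix.vecMulVec h h)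
      = ∑ i, ∑ h ∈ V, (f i ⬝ᵥ h) ^ 2 := by
    rw [mip_sum_left]
    apply Finset.sum_congr rfl; intro i _
    rw [mip_sum_right]
    apply Finset.sum_congr rfl; intro h _
    exact mip_vecMulVec (f i) h
  constructor
  · intro h0
    rw [key] at h0
    have hz : ∀ i ∈ Finset.univ, ∑ h ∈ V, (f i ⬝ᵥ h) ^ 2 = 0 := by
      rw [← Finset.sum_eq_zero_iff_of_nonneg]
      · exact h0
      · intro i _
        exact Finset.sum_nonneg fun h _ => sq_nonneg _
    refine ⟨k, hk, f, fun i => ⟨?_, hf i⟩, rfl⟩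
    intro h hh
    have := (Finset.sum_eq_zero_iff_of_nonneg (fun h _ => sq_nonneg (f i ⬝ᵥ h))).1
      (hz i (Finset.mem_univ i)) h hh
    exact pow_eq_zero_iff (by norm_num) |>.1 this
  · rintro ⟨k', hk', g, hg, hEq⟩
    rw [hEq, mip_sum_left]
    apply Finset.sum_eq_zero
    intro i _
    rw [mip_sum_right]
    apply Finset.sum_eq_zero
    intro h hh
    rw [mip_vecMulVec, (hg i).1 h hh]
    simp
end

section
/- For a nonzero closed cone K in ℝⁿ, the extreme rays of CP(K) are exactly the rays ℝ₊·aaᵀ with a ∈ K \ {0}, and every such extreme ray is an exposed face of CP(K). -/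
open Matrix
open scoped Pointwise

namespace StmtTwoAux

variable {n : ℕ}

lemma mip_add_right (H A B : Matrix (Fin n) (Fin n) ℝ) :
    mip H (A + B) = mip H A + mip H B := by
  simp [mip, mul_add, Finset.sum_add_distrib]

lemma mip_sum_right (H : Matrix (Fin n) (Fin n) ℝ) {k : ℕ} (A : Fin k → Matrix (Fin n) (Fin n) ℝ)
    (s : Finset (Fin k)) : mip H (∑ i ∈ s, A i) = ∑ i ∈ s, mip H (A i) := by
  classical
  induction s using Finset.induction with
  | empty => simp [mip]
  | insert _ _ h ih => rw [Finset.sum_insert h, Finset.sum_insert h, mip_add_right, ih]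

lemma mip_smul_right (H A : Matrix (Fin n) (Fin n) ℝ) (c : ℝ) :
    mip H (c • A) = c * mip H A := by
  simp [mip, Finset.mul_sum, Matrix.smul_apply, smul_eq_mul, mul_left_comm]

lemma mip_sub_left (G H A : Matrix (Fin n) (Fin n) ℝ) :
    mip (G - H) A = mip G A - mip H A := by
  simp [mip, sub_mul, Finset.sum_sub_distrib]

lemma mip_one_vmv (b : Fin n → ℝ) :
    mip 1 (Matrix.vecMulVec b b) = b ⬝ᵥ b := by
  simp [mip, Matrix.one_apply, ite_mul, zero_mul, one_mul, Matrix.vecMulVec_apply,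
    dotProduct]

lemma mip_smul_one (c : ℝ) (B : Matrix (Fin n) (Fin n) ℝ) :
    mip (c • (1 : Matrix (Fin n) (Fin n) ℝ)) B = c * ∑ i, B i i := by
  simp [mip, Matrix.smul_apply, Matrix.one_apply, smul_eq_mul, ite_mul, zero_mul, one_mul,
    mul_ite, mul_zero, Finset.mul_sum]

lemma mip_vmv_vmv (a b : Fin n → ℝ) :
    mip (Matrix.vecMulVec a a) (Matrix.vecMulVec b b) = (a ⬝ᵥ b) ^ 2 := by
  rw [sq, dotProduct, Finset.sum_mul_sum]
  simp only [mip, Matrix.vecMulVec_apply]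
  apply Finset.sum_congr rfl; intro i _
  apply Finset.sum_congr rfl; intro j _
  ring

/-- The exposing matrix `H = (aᵀa)·I − aaᵀ`. -/
noncomputable def Hm (a : Fin n → ℝ) : Matrix (Fin n) (Fin n) ℝ :=
  (a ⬝ᵥ a) • (1 : Matrix (Fin n) (Fin n) ℝ) - Matrix.vecMulVec a a

lemma mip_Hm_vmv (a b : Fin n → ℝ) :
    mip (Hm a) (Matrix.vecMulVec b b) = (a ⬝ᵥ a) * (b ⬝ᵥ b) - (a ⬝ᵥ b) ^ 2 := by
  rw [Hm, mip_sub_left, mip_smul_one, mip_vmv_vmv]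
  simp [Matrix.vecMulVec_apply, dotProduct]

lemma dot_self_nonneg (x : Fin n → ℝ) : 0 ≤ x ⬝ᵥ x :=
  Finset.sum_nonneg fun i _ => mul_self_nonneg _

lemma cs_nonneg (a b : Fin n → ℝ) :
    0 ≤ (a ⬝ᵥ a) * (b ⬝ᵥ b) - (a ⬝ᵥ b) ^ 2 := by
  by_cases ha : a = 0
  · simp [ha]
  · have hs : 0 < a ⬝ᵥ a :=
      lt_of_le_of_ne (dot_self_nonneg a) (fun h => ha (dotProduct_self_eq_zero.mp h.symm))
    have h := dot_self_nonneg ((a ⬝ᵥ a) • b - (a ⬝ᵥ b) • a)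
    simp only [sub_dotProduct, dotProduct_sub, smul_dotProduct,
      dotProduct_smul, smul_eq_mul, dotProduct_comm b a] at h
    nlinarith [h, hs]

lemma cs_eq (a b : Fin n → ℝ) (ha : a ≠ 0)
    (h : (a ⬝ᵥ a) * (b ⬝ᵥ b) - (a ⬝ᵥ b) ^ 2 = 0) : ∃ t : ℝ, b = t • a := by
  have hs : 0 < a ⬝ᵥ a :=
    lt_of_le_of_ne (dot_self_nonneg a) (fun h' => ha (dotProduct_self_eq_zero.mp h'.symm))
  have hz : ((a ⬝ᵥ a) • b - (a ⬝ᵥ b) • a) ⬝ᵥ ((a ⬝ᵥ a) • b - (a ⬝ᵥ b) • a) = 0 := by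
    simp only [sub_dotProduct, dotProduct_sub, smul_dotProduct,
      dotProduct_smul, smul_eq_mul, dotProduct_comm b a]
    nlinarith [h]
  have hz2 : (a ⬝ᵥ a) • b - (a ⬝ᵥ b) • a = 0 := dotProduct_self_eq_zero.mp hz
  refine ⟨(a ⬝ᵥ b) / (a ⬝ᵥ a), ?_⟩
  have heq : (a ⬝ᵥ a) • b = (a ⬝ᵥ b) • a := by linear_combination (norm := module) hz2
  funext i
  have h3 := congrFun heq i
  simp only [Pi.smul_apply, smul_eq_mul] at h3 ⊢
  field_simp
  linarith

lemma vecMulVec_ne_zero {b : Fin n → ℝ} (hb : b ≠ 0) : Matrix.vecMulVec b b ≠ 0 := by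
  obtain ⟨i, hi⟩ := Function.ne_iff.mp hb
  intro h
  have h2 : Matrix.vecMulVec b b i i = (0 : Matrix (Fin n) (Fin n) ℝ) i i := by rw [h]
  simp only [Matrix.vecMulVec_apply, Matrix.zero_apply] at h2
  exact hi (by simpa using mul_self_eq_zero.mp h2)

lemma vmv_smul (t : ℝ) (a : Fin n → ℝ) :
    Matrix.vecMulVec (t • a) (t • a) = (t * t) • Matrix.vecMulVec a a := by
  ext i j
  simp only [Matrix.vecMulVec_apply, Matrix.smul_apply, Pi.smul_apply, smul_eq_mul]
  ring

lemma vmv_mem_CP {K : Set (Fin n → ℝ)} {a : Fin n → ℝ} (ha : a ∈ K) :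
    Matrix.vecMulVec a a ∈ CPset K :=
  ⟨1, one_pos, fun _ => a, fun _ => ha, by simp⟩

lemma smul_vmv_mem_CP {K : Set (Fin n → ℝ)}
    (hKcone : ∀ x ∈ K, ∀ c : ℝ, 0 ≤ c → c • x ∈ K)
    {a : Fin n → ℝ} (ha : a ∈ K) {c : ℝ} (hc : 0 ≤ c) :
    c • Matrix.vecMulVec a a ∈ CPset K := by
  have h := vmv_mem_CP (K := K) (hKcone a ha (Real.sqrt c) (Real.sqrt_nonneg c))
  rwa [vmv_smul, Real.mul_self_sqrt hc] at h

lemma mip_one_nonneg_CP {K : Set (Fin n → ℝ)} {A : Matrix (Fin n) (Fin n) ℝ}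
    (hA : A ∈ CPset K) : 0 ≤ mip 1 A := by
  obtain ⟨k, hk, f, hf, rfl⟩ := hA
  rw [mip_sum_right]
  exact Finset.sum_nonneg fun i _ => by rw [mip_one_vmv]; exact dot_self_nonneg _

lemma mip_Hm_nonneg {K : Set (Fin n → ℝ)} (a : Fin n → ℝ) {A : Matrix (Fin n) (Fin n) ℝ}
    (hA : A ∈ CPset K) : 0 ≤ mip (Hm a) A := by
  obtain ⟨k, hk, f, hf, rfl⟩ := hA
  rw [mip_sum_right]
  exact Finset.sum_nonneg fun i _ => by rw [mip_Hm_vmv]; exact cs_nonneg _ _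

lemma mip_Hm_eq_zero {K : Set (Fin n → ℝ)} {a : Fin n → ℝ} (ha : a ≠ 0)
    {A : Matrix (Fin n) (Fin n) ℝ} (hA : A ∈ CPset K) (h0 : mip (Hm a) A = 0) :
    ∃ c : ℝ, 0 ≤ c ∧ A = c • Matrix.vecMulVec a a := by
  obtain ⟨k, hk, f, hf, rfl⟩ := hA
  rw [mip_sum_right] at h0
  have hterm : ∀ i ∈ Finset.univ, mip (Hm a) (Matrix.vecMulVec (f i) (f i)) = 0 :=
    (Finset.sum_eq_zero_iff_of_nonneg
      (fun i _ => by rw [mip_Hm_vmv]; exact cs_nonneg _ _)).mp h0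
  have hch : ∀ i, ∃ t : ℝ, f i = t • a := fun i =>
    cs_eq a (f i) ha (by rw [← mip_Hm_vmv]; exact hterm i (Finset.mem_univ i))
  choose t ht using hch
  refine ⟨∑ i, t i * t i, Finset.sum_nonneg fun i _ => mul_self_nonneg _, ?_⟩
  rw [Finset.sum_smul]
  exact Finset.sum_congr rfl fun i _ => by rw [ht i, vmv_smul]

lemma mip_Hm_self (a : Fin n → ℝ) : mip (Hm a) (Matrix.vecMulVec a a) = 0 := by
  rw [mip_Hm_vmv]; ring

lemma ray_isFace {K : Set (Fin n → ℝ)}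
    (hKcone : ∀ x ∈ K, ∀ c : ℝ, 0 ≤ c → c • x ∈ K)
    {a : Fin n → ℝ} (ha : a ∈ K) (ha0 : a ≠ 0) :
    IsFaceOf (CPset K) (rayOf (Matrix.vecMulVec a a)) := by
  refine ⟨⟨Matrix.vecMulVec a a, 1, zero_le_one, (one_smul _ _).symm⟩, ?_, ?_, ?_, ?_⟩
  · rintro x ⟨c, hc, rfl⟩
    exact smul_vmv_mem_CP hKcone ha hc
  · rintro x ⟨c, hc, rfl⟩ y ⟨d, hd, rfl⟩ s u hs hu hsu
    refine ⟨s * c + u * d, by positivity, ?_⟩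
    rw [smul_smul, smul_smul, add_smul]
  · rintro x ⟨c, hc, rfl⟩ e he
    exact ⟨e * c, mul_nonneg he hc, smul_smul e c _⟩
  · rintro A hA B hB ⟨c, hc, hcE⟩
    have h0 : mip (Hm a) A + mip (Hm a) B = 0 := by
      rw [← mip_add_right, hcE, mip_smul_right, mip_Hm_self, mul_zero]
    have hA0 := mip_Hm_nonneg (K := K) a hA
    have hB0 := mip_Hm_nonneg (K := K) a hB
    have h1 : mip (Hm a) A = 0 := by linarith
    have h2 : mip (Hm a) B = 0 := by linarith
    obtain ⟨cA, hcA, hAe⟩ := mip_Hm_eq_zero ha0 hA h1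
    obtain ⟨cB, hcB, hBe⟩ := mip_Hm_eq_zero ha0 hB h2
    exact ⟨⟨cA, hcA, hAe⟩, ⟨cB, hcB, hBe⟩⟩

lemma ray_span {a : Fin n → ℝ} :
    Submodule.span ℝ (rayOf (Matrix.vecMulVec a a)) =
      Submodule.span ℝ {Matrix.vecMulVec a a} := by
  apply le_antisymm
  · rw [Submodule.span_le]
    rintro x ⟨c, hc, rfl⟩
    exact Submodule.smul_mem _ c (Submodule.mem_span_singleton_self _)
  · apply Submodule.span_mono
    intro x hx
    rw [Set.mem_singleton_iff] at hx
    exact ⟨1, zero_le_one, by rw [hx, one_smul]⟩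

lemma ray_dim {a : Fin n → ℝ} (ha0 : a ≠ 0) :
    setDim (rayOf (Matrix.vecMulVec a a)) = 1 := by
  rw [setDim, ray_span, finrank_span_singleton (vecMulVec_ne_zero ha0)]

lemma forward {K : Set (Fin n → ℝ)} {F : Set (Matrix (Fin n) (Fin n) ℝ)}
    (h0K : (0 : Fin n → ℝ) ∈ K)
    (hF : IsExtremeRayOf (CPset K) F) :
    ∃ a ∈ K, a ≠ 0 ∧ F = rayOf (Matrix.vecMulVec a a) := by
  classical
  obtain ⟨⟨hne, hsub, hconv, hscale, hface⟩, hdim⟩ := hF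
  have hex : ∃ A ∈ F, A ≠ 0 := by
    by_contra h
    push_neg at h
    have hle : Submodule.span ℝ F ≤ ⊥ := by
      rw [Submodule.span_le]
      intro A hA
      simp [h A hA]
    rw [setDim, le_bot_iff.mp hle, finrank_bot] at hdim
    omega
  obtain ⟨A, hAF, hA0⟩ := hex
  obtain ⟨k, hk, f, hf, hAeq⟩ := hsub hAF
  have hexi : ∃ i, f i ≠ 0 := by
    by_contra h
    push_neg at h
    apply hA0
    rw [hAeq]
    apply Finset.sum_eq_zero
    intro i _
    rw [h i]
    ext i' j'
    simp [Matrix.vecMulVec_apply]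
  obtain ⟨i, hi⟩ := hexi
  set v := Matrix.vecMulVec (f i) (f i) with hv
  set g : Fin k → (Fin n → ℝ) := fun j => if j = i then 0 else f j with hg
  have hsplit : A = v + ∑ j, Matrix.vecMulVec (g j) (g j) := by
    have h1 : v = ∑ j, if j = i then Matrix.vecMulVec (f j) (f j) else 0 := by
      rw [Finset.sum_ite_eq' Finset.univ i]
      simp [hv]
    have h2 : ∀ j, Matrix.vecMulVec (g j) (g j) =
        if j = i then 0 else Matrix.vecMulVec (f j) (f j) := by
      intro j
      by_cases hj : j = i
      · simp only [hg, hj, if_pos rfl]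
        ext i' j'
        simp [Matrix.vecMulVec_apply]
      · simp [hg, hj]
    rw [h1, ← Finset.sum_add_distrib, hAeq]
    apply Finset.sum_congr rfl
    intro j _
    rw [h2 j]
    by_cases hj : j = i <;> simp [hj]
  have hvCP : v ∈ CPset K := vmv_mem_CP (hf i)
  have hBCP : (∑ j, Matrix.vecMulVec (g j) (g j)) ∈ CPset K :=
    ⟨k, hk, g, fun j => by by_cases hj : j = i <;> simp [hg, hj, h0K, hf j], rfl⟩
  have hvF : v ∈ F := (hface v hvCP _ hBCP (hsplit ▸ hAF)).1
  have hvne : v ≠ 0 := vecMulVec_ne_zero hi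
  refine ⟨f i, hf i, hi, ?_⟩
  have hsp : Submodule.span ℝ {v} = Submodule.span ℝ F := by
    apply Submodule.eq_of_le_of_finrank_le
    · exact Submodule.span_mono (Set.singleton_subset_iff.mpr hvF)
    · rw [finrank_span_singleton hvne]
      rw [setDim] at hdim
      omega
  ext X
  constructor
  · intro hXF
    have hXs : X ∈ Submodule.span ℝ {v} := by
      rw [hsp]
      exact Submodule.subset_span hXF
    obtain ⟨c, hc⟩ := Submodule.mem_span_singleton.mp hXs
    refine ⟨c, ?_, hc.symm⟩
    have htr : 0 ≤ mip 1 X := mip_one_nonneg_CP (hsub hXF)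
    rw [← hc, mip_smul_right, mip_one_vmv] at htr
    have hpos : 0 < (f i) ⬝ᵥ (f i) :=
      lt_of_le_of_ne (dot_self_nonneg _)
        (fun h => hi (dotProduct_self_eq_zero.mp h.symm))
    nlinarith [htr, hpos]
  · rintro ⟨c, hc, rfl⟩
    exact hscale v hvF c hc

end StmtTwoAux

/-- for a nonzero closed cone `K`, the extreme rays of `CP(K)` are
exactly the rays `ℝ₊ aaᵀ` with `a ∈ K \ {0}`, and each extreme ray is exposed. -/
theorem stmt2 (n : ℕ) (K : Set (Fin n → ℝ)) (hKcl : IsClosed K)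
    (hKcone : ∀ x ∈ K, ∀ c : ℝ, 0 ≤ c → c • x ∈ K)
    (hKne : ∃ x ∈ K, x ≠ 0) :
    (∀ F : Set (Matrix (Fin n) (Fin n) ℝ),
        IsExtremeRayOf (CPset K) F ↔
          ∃ a ∈ K, a ≠ 0 ∧ F = rayOf (Matrix.vecMulVec a a)) ∧
    (∀ F : Set (Matrix (Fin n) (Fin n) ℝ),
        IsExtremeRayOf (CPset K) F → IsExposedFaceOf (CPset K) F) := by
  classical
  have h0K : (0 : Fin n → ℝ) ∈ K := by
    obtain ⟨x, hx, -⟩ := hKne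
    simpa using hKcone x hx 0 le_rfl
  constructor
  · intro F
    constructor
    · exact StmtTwoAux.forward h0K
    · rintro ⟨a, ha, ha0, rfl⟩
      exact ⟨StmtTwoAux.ray_isFace hKcone ha ha0, StmtTwoAux.ray_dim ha0⟩
  · intro F hF
    obtain ⟨a, ha, ha0, rfl⟩ := StmtTwoAux.forward h0K hF
    refine ⟨StmtTwoAux.ray_isFace hKcone ha ha0, StmtTwoAux.Hm a,
      fun A hA => StmtTwoAux.mip_Hm_nonneg a hA, ?_⟩
    ext A
    simp only [Set.mem_setOf_eq]
    constructor
    · rintro ⟨c, hc, rfl⟩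
      refine ⟨StmtTwoAux.smul_vmv_mem_CP hKcone ha hc, ?_⟩
      rw [StmtTwoAux.mip_smul_right, StmtTwoAux.mip_Hm_self, mul_zero]
    · rintro ⟨hA, h0⟩
      exact StmtTwoAux.mip_Hm_eq_zero ha0 hA h0
end

section
/- For n ≥ 2, the length of a longest chain of faces of COP(Lⁿ) equals n + 2; that is, there exists a chain F_{n+2} ⊊ ⋯ ⊊ F₁ of faces of COP(Lⁿ), and every chain F_l ⊊ ⋯ ⊊ F₁ of faces of COP(Lⁿ) satisfies l ≤ n + 2. -/
open Matrix
open scoped Pointwise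

noncomputable section
namespace St8

/-- quadratic form of a matrix -/
def qf {n : ℕ} (A : Matrix (Fin n) (Fin n) ℝ) (x : Fin n → ℝ) : ℝ := x ⬝ᵥ A.mulVec x

/-- the PSD cone -/
def Sp (n : ℕ) : Set (Matrix (Fin n) (Fin n) ℝ) := {A | A.IsSymm ∧ ∀ x, 0 ≤ qf A x}

variable {n : ℕ}

lemma qf_add_mat (A B : Matrix (Fin n) (Fin n) ℝ) (x : Fin n → ℝ) :
    qf (A + B) x = qf A x + qf B x := by
  simp [qf, add_mulVec, dotProduct_add]

lemma qf_smul_mat (c : ℝ) (A : Matrix (Fin n) (Fin n) ℝ) (x : Fin n → ℝ) :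
    qf (c • A) x = c * qf A x := by
  simp [qf, smul_mulVec, dotProduct_smul]

lemma qf_sub_mat (A B : Matrix (Fin n) (Fin n) ℝ) (x : Fin n → ℝ) :
    qf (A - B) x = qf A x - qf B x := by
  simp [qf, sub_mulVec, dotProduct_sub]

lemma qf_smul_vec (A : Matrix (Fin n) (Fin n) ℝ) (c : ℝ) (x : Fin n → ℝ) :
    qf A (c • x) = c ^ 2 * qf A x := by
  simp [qf, mulVec_smul, dotProduct_smul, smul_dotProduct]; ring

lemma qf_neg_vec (A : Matrix (Fin n) (Fin n) ℝ) (x : Fin n → ℝ) :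
    qf A (-x) = qf A x := by
  have : (-x) = (-1 : ℝ) • x := by funext i; simp
  rw [this, qf_smul_vec]; ring

lemma bil_comm {A : Matrix (Fin n) (Fin n) ℝ} (hA : A.IsSymm) (x y : Fin n → ℝ) :
    x ⬝ᵥ A.mulVec y = y ⬝ᵥ A.mulVec x := by
  rw [dotProduct_mulVec, ← vecMul_transpose, hA.eq, dotProduct_comm]

lemma qf_add_vec {A : Matrix (Fin n) (Fin n) ℝ} (hA : A.IsSymm) (x y : Fin n → ℝ) :
    qf A (x + y) = qf A x + 2 * (x ⬝ᵥ A.mulVec y) + qf A y := by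
  simp only [qf, mulVec_add, dotProduct_add, add_dotProduct]
  rw [bil_comm hA y x]; ring

lemma bil_smul_left (A : Matrix (Fin n) (Fin n) ℝ) (c : ℝ) (x y : Fin n → ℝ) :
    (c • x) ⬝ᵥ A.mulVec y = c * (x ⬝ᵥ A.mulVec y) := by
  simp [smul_dotProduct]

lemma bil_smul_right (A : Matrix (Fin n) (Fin n) ℝ) (c : ℝ) (x y : Fin n → ℝ) :
    x ⬝ᵥ A.mulVec (c • y) = c * (x ⬝ᵥ A.mulVec y) := by
  simp [mulVec_smul, dotProduct_smul]

lemma qf_combo {A : Matrix (Fin n) (Fin n) ℝ} (hA : A.IsSymm) (s t : ℝ) (u v : Fin n → ℝ) :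
    qf A (s • u + t • v)
      = s ^ 2 * qf A u + 2 * (s * t) * (u ⬝ᵥ A.mulVec v) + t ^ 2 * qf A v := by
  rw [qf_add_vec hA, qf_smul_vec, qf_smul_vec, bil_smul_left, bil_smul_right]; ring

/-- PSD zero set is kernel -/
lemma psd_kernel {A : Matrix (Fin n) (Fin n) ℝ} (hA : A ∈ Sp n) {x : Fin n → ℝ}
    (hx : qf A x = 0) : A.mulVec x = 0 := by
  obtain ⟨hs, hq⟩ := hA
  have key : ∀ y, y ⬝ᵥ A.mulVec x = 0 := by
    intro y
    set c := y ⬝ᵥ A.mulVec x with hc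
    set d := qf A y with hd
    have hd0 : 0 ≤ d := hq y
    have h := hq (x + (-(c / (d + 1))) • y)
    rw [qf_add_vec hs, hx, qf_smul_vec, bil_smul_right] at h
    have h2 : x ⬝ᵥ A.mulVec y = c := bil_comm hs x y ▸ rfl
    rw [h2] at h
    have he : (0:ℝ) < d + 1 := by linarith
    have hne : d + 1 ≠ 0 := ne_of_gt he
    rw [← hd] at h
    field_simp at h
    have hy : (0:ℝ) < (d + 1) * (d + 1) ^ 2 := by positivity
    have h5 : 0 ≤ -(2 * (c * c) * (d + 1) ^ 2) + c ^ 2 * d * (d + 1) := by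
      nlinarith [mul_le_mul_of_nonneg_left h he.le]
    nlinarith [sq_nonneg c, hd0, he, sq_nonneg (c*(d+1))]
  funext i
  have := key (Pi.single i 1)
  rwa [single_dotProduct, one_mul] at this

lemma Sp_zero : (0 : Matrix (Fin n) (Fin n) ℝ) ∈ Sp n := by
  constructor
  · simp [Matrix.IsSymm]
  · intro x; simp [qf]

lemma Sp_add {A B : Matrix (Fin n) (Fin n) ℝ} (hA : A ∈ Sp n) (hB : B ∈ Sp n) :
    A + B ∈ Sp n := by
  refine ⟨hA.1.add hB.1, fun x => ?_⟩
  rw [qf_add_mat]; exact add_nonneg (hA.2 x) (hB.2 x)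

lemma Sp_smul {A : Matrix (Fin n) (Fin n) ℝ} (hA : A ∈ Sp n) {c : ℝ} (hc : 0 ≤ c) :
    c • A ∈ Sp n := by
  refine ⟨?_, fun x => ?_⟩
  · unfold Matrix.IsSymm; rw [transpose_smul, hA.1.eq]
  · rw [qf_smul_mat]; exact mul_nonneg hc (hA.2 x)

end St8
namespace St8

variable {m : ℕ}

lemma qJ_eq (x : Fin (m+1) → ℝ) :
    qf (Jmat m) x = x 0 ^ 2 - ∑ i : Fin m, x i.succ ^ 2 := by
  unfold qf Jmat dotProduct
  rw [Fin.sum_univ_succ]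
  rw [mulVec_diagonal]
  simp only [mulVec_diagonal, if_pos rfl]
  have : ∀ i : Fin m, x i.succ * ((if i.succ = 0 then (1:ℝ) else -1) * x i.succ)
      = -(x i.succ ^ 2) := by
    intro i
    rw [if_neg (Fin.succ_ne_zero i)]; ring
  rw [Finset.sum_congr rfl (fun i _ => this i)]
  rw [Finset.sum_neg_distrib]
  simp only [if_true]
  ring

lemma Jmat_symm : (Jmat m).IsSymm := isSymm_diagonal _

lemma mem_soc_iff (x : Fin (m+1) → ℝ) :
    x ∈ soc m ↔ 0 ≤ x 0 ∧ ∑ i : Fin m, x i.succ ^ 2 ≤ x 0 ^ 2 := by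
  unfold soc
  constructor
  · intro h
    have hs : 0 ≤ ∑ i : Fin m, x i.succ ^ 2 := Finset.sum_nonneg fun i _ => sq_nonneg _
    have h0 : 0 ≤ x 0 := le_trans (Real.sqrt_nonneg _) h
    refine ⟨h0, ?_⟩
    have h' : Real.sqrt (∑ i : Fin m, x i.succ ^ 2) ≤ x 0 := h
    have := Real.sq_sqrt hs
    nlinarith [Real.sqrt_nonneg (∑ i : Fin m, x i.succ ^ 2)]
  · rintro ⟨h0, hs⟩
    have := Real.sqrt_le_sqrt hs
    rwa [Real.sqrt_sq h0] at this

lemma qJ_nonneg_iff (x : Fin (m+1) → ℝ) :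
    0 ≤ qf (Jmat m) x ↔ x ∈ soc m ∨ -x ∈ soc m := by
  rw [qJ_eq]
  constructor
  · intro h
    rcases le_or_gt 0 (x 0) with h0 | h0
    · left; rw [mem_soc_iff]; exact ⟨h0, by linarith⟩
    · right; rw [mem_soc_iff]
      constructor
      · simp only [Pi.neg_apply]; linarith
      · simp only [Pi.neg_apply, neg_sq]; linarith
  · intro h
    rcases h with h | h <;> rw [mem_soc_iff] at h
    · linarith [h.2]
    · obtain ⟨h1, h2⟩ := h
      simp only [Pi.neg_apply, neg_sq] at h1 h2
      linarith

lemma cop_qJ {A : Matrix (Fin (m+1)) (Fin (m+1)) ℝ} (hA : A ∈ COPset (soc m)) :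
    ∀ x, 0 ≤ qf (Jmat m) x → 0 ≤ qf A x := by
  intro x hx
  rcases (qJ_nonneg_iff x).mp hx with h | h
  · exact hA.2 x h
  · have h2 := hA.2 (-x) h
    have h3 : qf A (-x) = qf A x := qf_neg_vec A x
    rw [← h3]; exact h2

lemma Jmat_mem_COP : Jmat m ∈ COPset (soc m) := by
  refine ⟨Jmat_symm, fun x hx => ?_⟩
  rw [mem_soc_iff] at hx
  have : qf (Jmat m) x = x 0 ^ 2 - ∑ i : Fin m, x i.succ ^ 2 := qJ_eq x
  show 0 ≤ qf (Jmat m) x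
  rw [this]; linarith [hx.2]

lemma Sp_subset_COP : Sp (m+1) ⊆ COPset (soc m) := by
  rintro A ⟨h1, h2⟩
  exact ⟨h1, fun x _ => h2 x⟩

lemma COP_add {A B : Matrix (Fin (m+1)) (Fin (m+1)) ℝ} (hA : A ∈ COPset (soc m))
    (hB : B ∈ COPset (soc m)) : A + B ∈ COPset (soc m) := by
  refine ⟨hA.1.add hB.1, fun x hx => ?_⟩
  show 0 ≤ qf (A + B) x
  rw [qf_add_mat]
  exact add_nonneg (hA.2 x hx) (hB.2 x hx)

lemma COP_smul {A : Matrix (Fin (m+1)) (Fin (m+1)) ℝ} (hA : A ∈ COPset (soc m))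
    {c : ℝ} (hc : 0 ≤ c) : c • A ∈ COPset (soc m) := by
  refine ⟨?_, fun x hx => ?_⟩
  · unfold Matrix.IsSymm; rw [transpose_smul, hA.1.eq]
  · show 0 ≤ qf (c • A) x
    rw [qf_smul_mat]
    exact mul_nonneg hc (hA.2 x hx)

lemma COP_zero : (0 : Matrix (Fin (m+1)) (Fin (m+1)) ℝ) ∈ COPset (soc m) :=
  Sp_subset_COP Sp_zero

end St8
namespace St8

variable {m : ℕ}

/-- 2D core of the S-lemma. -/
lemma core2D {A : Matrix (Fin (m+1)) (Fin (m+1)) ℝ} (hA : A.IsSymm)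
    {u v : Fin (m+1) → ℝ} (hu : qf (Jmat m) u = 1) (hv : qf (Jmat m) v = -1)
    (huv : u ⬝ᵥ (Jmat m).mulVec v = 0)
    (h1 : 0 ≤ qf A (u + v)) (h2 : 0 ≤ qf A (u - v)) (s t : ℝ) :
    ((qf A u - qf A v) / 2) * qf (Jmat m) (s • u + t • v) ≤ qf A (s • u + t • v) := by
  have e1 : qf (Jmat m) (s • u + t • v) = s ^ 2 - t ^ 2 := by
    rw [qf_combo Jmat_symm, hu, hv, huv]; ring
  have e2 := qf_combo hA s t u v
  have hup : u + v = (1:ℝ) • u + (1:ℝ) • v := by simp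
  have hum : u - v = (1:ℝ) • u + (-1:ℝ) • v := by
    funext i; simp [sub_eq_add_neg]
  rw [hup, qf_combo hA] at h1
  rw [hum, qf_combo hA] at h2
  rw [e1, e2]
  nlinarith [sq_nonneg (s + t), sq_nonneg (s - t), mul_nonneg h1 (sq_nonneg (s + t)),
    mul_nonneg h2 (sq_nonneg (s - t))]

/-- pair version of the S-lemma -/
lemma pairS {A : Matrix (Fin (m+1)) (Fin (m+1)) ℝ} (hA : A.IsSymm)
    (hcop : ∀ z, 0 ≤ qf (Jmat m) z → 0 ≤ qf A z)
    {x y : Fin (m+1) → ℝ} (hx : 0 < qf (Jmat m) x) (hy : qf (Jmat m) y < 0) :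
    ∃ μ : ℝ, μ * qf (Jmat m) x ≤ qf A x ∧ μ * qf (Jmat m) y ≤ qf A y := by
  set a := qf (Jmat m) x with ha
  set c := x ⬝ᵥ (Jmat m).mulVec y with hc
  set v' := a • y + (-c) • x with hv'
  have hyx : y ⬝ᵥ (Jmat m).mulVec x = c := by rw [bil_comm Jmat_symm y x, ← hc]
  have hqv' : qf (Jmat m) v' = a * (a * qf (Jmat m) y - c ^ 2) := by
    rw [hv', qf_combo Jmat_symm, hyx, ← ha]; ring
  set b := -(qf (Jmat m) v') with hb
  have hbpos : 0 < b := by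
    rw [hb, hqv']
    have h1 : a * qf (Jmat m) y - c ^ 2 < 0 := by nlinarith [sq_nonneg c]
    nlinarith
  have hsa : (0:ℝ) < Real.sqrt a := Real.sqrt_pos.mpr hx
  have hsb : (0:ℝ) < Real.sqrt b := Real.sqrt_pos.mpr hbpos
  set u := (Real.sqrt a)⁻¹ • x with hu
  set w := (Real.sqrt b)⁻¹ • v' with hw
  have hqu : qf (Jmat m) u = 1 := by
    rw [hu, qf_smul_vec, ← ha]
    rw [inv_pow, Real.sq_sqrt (le_of_lt hx)]
    field_simp
  have hqw : qf (Jmat m) w = -1 := by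
    rw [hw, qf_smul_vec]
    rw [inv_pow, Real.sq_sqrt (le_of_lt hbpos)]
    have h9 : qf (Jmat m) v' = -b := by rw [hb]; ring
    rw [h9]
    field_simp
  have huw : u ⬝ᵥ (Jmat m).mulVec w = 0 := by
    rw [hu, hw, bil_smul_left, bil_smul_right, hv']
    have hxx : x ⬝ᵥ (Jmat m).mulVec x = a := rfl
    have h9 : x ⬝ᵥ (Jmat m).mulVec (a • y + (-c) • x) = a * c + (-c) * a := by
      rw [mulVec_add, dotProduct_add, bil_smul_right, bil_smul_right, ← hc, hxx]
    rw [h9]; ring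
  have h1 : 0 ≤ qf A (u + w) := by
    apply hcop
    rw [show u + w = (1:ℝ) • u + (1:ℝ) • w by simp, qf_combo Jmat_symm, hqu, hqw, huw]; norm_num
  have h2 : 0 ≤ qf A (u - w) := by
    apply hcop
    rw [show u - w = (1:ℝ) • u + (-1:ℝ) • w by funext i; simp [sub_eq_add_neg],
      qf_combo Jmat_symm, hqu, hqw, huw]
    norm_num
  set μ := (qf A u - qf A w) / 2 with hμ
  refine ⟨μ, ?_, ?_⟩
  · have hx_eq : x = Real.sqrt a • u + (0:ℝ) • w := by
      rw [hu]; rw [smul_smul]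
      rw [mul_inv_cancel₀ (ne_of_gt hsa)]
      simp
    have := core2D hA hqu hqw huw h1 h2 (Real.sqrt a) 0
    rw [← hx_eq] at this
    exact this
  · set s := c * Real.sqrt a * a⁻¹ with hs
    set t := Real.sqrt b * a⁻¹ with ht
    have hy_eq : y = s • u + t • w := by
      rw [hs, ht, hu, hw, smul_smul, smul_smul]
      have e1 : c * Real.sqrt a * a⁻¹ * (Real.sqrt a)⁻¹ = c * a⁻¹ := by
        rw [show c * Real.sqrt a * a⁻¹ * (Real.sqrt a)⁻¹
            = c * a⁻¹ * (Real.sqrt a * (Real.sqrt a)⁻¹) by ring]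
        rw [mul_inv_cancel₀ (ne_of_gt hsa), mul_one]
      have e2 : Real.sqrt b * a⁻¹ * (Real.sqrt b)⁻¹ = a⁻¹ := by
        rw [show Real.sqrt b * a⁻¹ * (Real.sqrt b)⁻¹ = a⁻¹ * (Real.sqrt b * (Real.sqrt b)⁻¹) by ring]
        rw [mul_inv_cancel₀ (ne_of_gt hsb)]; ring
      rw [e1, e2, hv']
      funext i
      simp only [Pi.add_apply, Pi.smul_apply, smul_eq_mul]
      have hane : a ≠ 0 := ne_of_gt hx
      field_simp
      try ring
    have := core2D hA hqu hqw huw h1 h2 s t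
    rw [← hy_eq] at this
    exact this

/-- global S-lemma, quadratic form version -/
lemma slemma_qf (hm : 1 ≤ m) {A : Matrix (Fin (m+1)) (Fin (m+1)) ℝ} (hA : A.IsSymm)
    (hcop : ∀ z, 0 ≤ qf (Jmat m) z → 0 ≤ qf A z) :
    ∃ μ : ℝ, 0 ≤ μ ∧ ∀ z, μ * qf (Jmat m) z ≤ qf A z := by
  set e0 : Fin (m+1) → ℝ := Pi.single 0 1 with he0
  set e1 : Fin (m+1) → ℝ := Pi.single ⟨1, by omega⟩ 1 with he1
  have hqe0 : qf (Jmat m) e0 = 1 := by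
    rw [qJ_eq]
    have h1 : e0 0 = 1 := by rw [he0]; simp
    have h2 : ∀ i : Fin m, e0 i.succ = 0 := by
      intro i
      rw [he0]
      exact Pi.single_eq_of_ne (Fin.succ_ne_zero i) 1
    rw [h1]
    rw [Finset.sum_congr rfl (fun i _ => by rw [h2 i])]
    simp
  have hqe1 : qf (Jmat m) e1 = -1 := by
    rw [qJ_eq]
    have h1 : e1 0 = 0 := by
      rw [he1]
      exact Pi.single_eq_of_ne (Fin.ne_of_val_ne (show (0:ℕ) ≠ (1:ℕ) by norm_num)) 1
    have h2 : ∑ i : Fin m, e1 i.succ ^ 2 = 1 := by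
      rw [Finset.sum_eq_single (⟨0, by omega⟩ : Fin m)]
      · rw [he1]
        have : (⟨0, by omega⟩ : Fin m).succ = (⟨1, by omega⟩ : Fin (m+1)) := rfl
        rw [this, Pi.single_eq_same]; norm_num
      · intro i _ hne
        have hv : (i : ℕ) ≠ 0 := by
          intro h0
          exact hne (Fin.ext h0)
        have hnee : i.succ ≠ (⟨1, by omega⟩ : Fin (m+1)) := by
          apply Fin.ne_of_val_ne
          show (i : ℕ) + 1 ≠ 1
          omega
        rw [he1, Pi.single_eq_of_ne hnee]
        norm_num
      · intro h; exact absurd (Finset.mem_univ _) h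
    rw [h1, h2]; norm_num
  set R : Set ℝ := {r | ∃ y, qf (Jmat m) y < 0 ∧ r = qf A y / qf (Jmat m) y} with hR
  have hRne : R.Nonempty := ⟨qf A e1 / qf (Jmat m) e1, e1, by rw [hqe1]; norm_num, rfl⟩
  have hub : ∀ r ∈ R, ∀ x, 0 < qf (Jmat m) x → r ≤ qf A x / qf (Jmat m) x := by
    rintro r ⟨y, hy, rfl⟩ x hx
    obtain ⟨μp, h1, h2⟩ := pairS hA hcop hx hy
    have hr : qf A y / qf (Jmat m) y ≤ μp := by
      rw [div_le_iff_of_neg hy]; exact h2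
    have hr2 : μp ≤ qf A x / qf (Jmat m) x := by
      rw [le_div_iff₀ hx]; exact h1
    linarith
  have hbdd : BddAbove R := by
    refine ⟨qf A e0 / qf (Jmat m) e0, fun r hr => ?_⟩
    exact hub r hr e0 (by rw [hqe0]; norm_num)
  set μ := max 0 (sSup R) with hμ
  refine ⟨μ, le_max_left _ _, fun z => ?_⟩
  rcases lt_trichotomy (qf (Jmat m) z) 0 with hz | hz | hz
  · have hmem : qf A z / qf (Jmat m) z ∈ R := ⟨z, hz, rfl⟩
    have : qf A z / qf (Jmat m) z ≤ μ := le_trans (le_csSup hbdd hmem) (le_max_right _ _)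
    rw [div_le_iff_of_neg hz] at this
    exact this
  · rw [hz, mul_zero]
    exact hcop z (le_of_eq hz.symm)
  · have hle : μ ≤ qf A z / qf (Jmat m) z := by
      apply max_le
      · apply div_nonneg (hcop z (le_of_lt hz)) (le_of_lt hz)
      · exact csSup_le hRne (fun r hr => hub r hr z hz)
    rw [le_div_iff₀ hz] at hle
    exact hle

/-- S-lemma, matrix version -/
lemma slemma (hm : 1 ≤ m) {A : Matrix (Fin (m+1)) (Fin (m+1)) ℝ}
    (hA : A ∈ COPset (soc m)) :
    ∃ μ : ℝ, 0 ≤ μ ∧ ∃ P ∈ Sp (m+1), A = P + μ • Jmat m := by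
  obtain ⟨μ, hμ0, hμ⟩ := slemma_qf hm hA.1 (cop_qJ hA)
  refine ⟨μ, hμ0, A - μ • Jmat m, ⟨?_, fun z => ?_⟩, by abel⟩
  · unfold Matrix.IsSymm
    rw [transpose_sub, transpose_smul, hA.1.eq, Jmat_symm.eq]
  · rw [qf_sub_mat, qf_smul_mat]
    linarith [hμ z]

end St8
namespace St8

variable {n : ℕ}

/-- kernel of a matrix as a submodule -/
def kerM (A : Matrix (Fin n) (Fin n) ℝ) : Submodule ℝ (Fin n → ℝ) :=
  LinearMap.ker A.mulVecLin

lemma mem_kerM {A : Matrix (Fin n) (Fin n) ℝ} {x : Fin n → ℝ} :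
    x ∈ kerM A ↔ A.mulVec x = 0 := by
  simp [kerM, LinearMap.mem_ker, mulVecLin_apply]

lemma matrix_eq_zero_of_mulVec {A : Matrix (Fin n) (Fin n) ℝ}
    (h : ∀ x, A.mulVec x = 0) : A = 0 := by
  ext i j
  have := congrFun (h (Pi.single j 1)) i
  rw [mulVec_single] at this
  simpa using this

lemma kerM_inf {A B : Matrix (Fin n) (Fin n) ℝ} (hA : A ∈ Sp n) (hB : B ∈ Sp n) :
    kerM (A + B) = kerM A ⊓ kerM B := by
  apply le_antisymm
  · intro x hx
    rw [mem_kerM] at hx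
    have h0 : qf (A + B) x = 0 := by
      unfold qf; rw [hx]; simp
    rw [qf_add_mat] at h0
    have h1 : qf A x = 0 := le_antisymm (by linarith [hA.2 x, hB.2 x]) (hA.2 x)
    have h2 : qf B x = 0 := by linarith
    exact Submodule.mem_inf.mpr ⟨mem_kerM.mpr (psd_kernel hA h1), mem_kerM.mpr (psd_kernel hB h2)⟩
  · intro x hx
    rw [Submodule.mem_inf, mem_kerM, mem_kerM] at hx
    rw [mem_kerM, add_mulVec, hx.1, hx.2, add_zero]

/-- continuity of quadratic forms -/
lemma qf_continuous (A : Matrix (Fin n) (Fin n) ℝ) : Continuous (qf A) := by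
  unfold qf dotProduct Matrix.mulVec
  apply continuous_finset_sum
  intro i _
  apply Continuous.mul (continuous_apply i)
  apply continuous_finset_sum
  intro j _
  exact Continuous.mul continuous_const (continuous_apply j)

lemma qf_bound (A : Matrix (Fin n) (Fin n) ℝ) (x : Fin n → ℝ) :
    qf A x ≤ (∑ i, ∑ j, |A i j|) * ‖x‖ ^ 2 := by
  have h1 : qf A x ≤ |qf A x| := le_abs_self _
  have hsum : ∑ i, ∑ j, |A i j| * ‖x‖ ^ 2 = (∑ i, ∑ j, |A i j|) * ‖x‖ ^ 2 := by
    rw [Finset.sum_mul]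
    exact Finset.sum_congr rfl fun i _ => (Finset.sum_mul _ _ _).symm
  have h2 : |qf A x| ≤ ∑ i, ∑ j, |A i j| * ‖x‖ ^ 2 := by
    unfold qf dotProduct Matrix.mulVec
    calc |∑ i, x i * ∑ j, A i j * x j| ≤ ∑ i, |x i * ∑ j, A i j * x j| :=
          Finset.abs_sum_le_sum_abs _ _
      _ ≤ ∑ i, ∑ j, |A i j| * ‖x‖ ^ 2 := by
          apply Finset.sum_le_sum
          intro i _
          rw [abs_mul]
          calc |x i| * |∑ j, A i j * x j| ≤ |x i| * ∑ j, |A i j * x j| := by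
                apply mul_le_mul_of_nonneg_left (Finset.abs_sum_le_sum_abs _ _) (abs_nonneg _)
            _ = ∑ j, |x i| * |A i j * x j| := Finset.mul_sum _ _ _
            _ ≤ ∑ j, |A i j| * ‖x‖ ^ 2 := by
                apply Finset.sum_le_sum
                intro j _
                rw [abs_mul]
                have hxi : |x i| ≤ ‖x‖ := by
                  have := norm_le_pi_norm x i
                  simpa using this
                have hxj : |x j| ≤ ‖x‖ := by
                  have := norm_le_pi_norm x j
                  simpa using this
                have hn : (0:ℝ) ≤ ‖x‖ := norm_nonneg _
                calc |x i| * (|A i j| * |x j|) = |A i j| * (|x i| * |x j|) := by ring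
                  _ ≤ |A i j| * (‖x‖ * ‖x‖) := by
                      apply mul_le_mul_of_nonneg_left _ (abs_nonneg _)
                      exact mul_le_mul hxi hxj (abs_nonneg _) hn
                  _ = |A i j| * ‖x‖ ^ 2 := by ring
  calc qf A x ≤ |qf A x| := h1
    _ ≤ ∑ i, ∑ j, |A i j| * ‖x‖ ^ 2 := h2
    _ = (∑ i, ∑ j, |A i j|) * ‖x‖ ^ 2 := hsum

/-- domination: if `ker B ⊆ ker A` with both PSD then `A ⪯ t B`. -/
lemma psd_dominate {A B : Matrix (Fin n) (Fin n) ℝ} (hA : A ∈ Sp n) (hB : B ∈ Sp n)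
    (hk : kerM B ≤ kerM A) : ∃ t : ℝ, 0 ≤ t ∧ t • B - A ∈ Sp n := by
  by_cases hB0 : B = 0
  · have hA0 : A = 0 := by
      apply matrix_eq_zero_of_mulVec
      intro x
      have : x ∈ kerM B := by rw [mem_kerM, hB0]; simp
      exact mem_kerM.mp (hk this)
    exact ⟨0, le_refl _, by rw [hA0, hB0]; simpa using Sp_zero⟩
  · set R := LinearMap.range B.mulVecLin with hR
    have hdisj : kerM B ⊓ R = ⊥ := by
      rw [Submodule.eq_bot_iff]
      intro x hx
      rw [Submodule.mem_inf] at hx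
      obtain ⟨hx1, hx2⟩ := hx
      obtain ⟨z, hz⟩ := hx2
      rw [mem_kerM] at hx1
      have hx' : x = B.mulVec z := by rw [← hz, mulVecLin_apply]
      have : x ⬝ᵥ x = 0 := by
        nth_rewrite 2 [hx']
        rw [bil_comm hB.1 x z, hx1, dotProduct_zero]
      exact (dotProduct_self_eq_zero).mp this
    have hsup : kerM B ⊔ R = ⊤ := by
      apply Submodule.eq_top_of_finrank_eq
      have h1 := Submodule.finrank_sup_add_finrank_inf_eq (kerM B) R
      rw [hdisj] at h1
      have h2 := LinearMap.finrank_range_add_finrank_ker B.mulVecLin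
      simp only [finrank_bot, add_zero] at h1
      have h3 : Module.finrank ℝ (Fin n → ℝ) = n := by
        simp [Module.finrank_pi]
      rw [h3] at h2 ⊢
      rw [hR] at h1 ⊢
      unfold kerM
      unfold kerM at h1
      omega
    -- compact minimum of qf B over sphere ∩ R
    by_cases hRbot : R = ⊥
    · exfalso
      apply hB0
      apply matrix_eq_zero_of_mulVec
      intro x
      have : B.mulVecLin x ∈ R := LinearMap.mem_range_self _ x
      rw [hRbot, Submodule.mem_bot] at this
      rwa [mulVecLin_apply] at this
    · obtain ⟨r0, hr0R, hr0⟩ := Submodule.exists_mem_ne_zero_of_ne_bot hRbot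
      set M : Set (Fin n → ℝ) := Metric.sphere 0 1 ∩ (R : Set (Fin n → ℝ)) with hM
      have hMc : IsCompact M :=
        (isCompact_sphere 0 1).inter_right R.closed_of_finiteDimensional
      have hMne : M.Nonempty := by
        refine ⟨‖r0‖⁻¹ • r0, ?_, Submodule.smul_mem R _ hr0R⟩
        simp [norm_smul, norm_ne_zero_iff.mpr hr0]
      obtain ⟨z, hzM, hzmin⟩ := (hMc.exists_isMinOn hMne (qf_continuous B).continuousOn)
      set δ := qf B z with hδ
      have hδpos : 0 < δ := by
        rcases lt_or_eq_of_le (hB.2 z) with h | h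
        · exact h
        · exfalso
          have hz0 : B.mulVec z = 0 := psd_kernel hB h.symm
          have hzK : z ∈ kerM B ⊓ R := ⟨mem_kerM.mpr hz0, hzM.2⟩
          rw [hdisj, Submodule.mem_bot] at hzK
          have := hzM.1
          rw [hzK] at this
          simp at this
      set CA := ∑ i, ∑ j, |A i j| with hCA
      have hCA0 : 0 ≤ CA := Finset.sum_nonneg fun i _ => Finset.sum_nonneg fun j _ => abs_nonneg _
      refine ⟨CA / δ, div_nonneg hCA0 (le_of_lt hδpos), ?_⟩
      constructor
      · unfold Matrix.IsSymm
        rw [transpose_sub, transpose_smul, hA.1.eq, hB.1.eq]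
      · intro x
        -- decompose x
        have hxtop : x ∈ kerM B ⊔ R := by rw [hsup]; trivial
        obtain ⟨k, hk1, r, hr1, hkr⟩ := Submodule.mem_sup.mp hxtop
        have hAk : A.mulVec k = 0 := mem_kerM.mp (hk (by exact hk1))
        have hBk : B.mulVec k = 0 := mem_kerM.mp hk1
        have hqfBx : qf B x = qf B r := by
          have e1 : qf B k = 0 := by unfold qf; rw [hBk, dotProduct_zero]
          have e2 : k ⬝ᵥ B.mulVec r = 0 := by
            rw [bil_comm hB.1 k r, hBk, dotProduct_zero]
          rw [← hkr, qf_add_vec hB.1, e1, e2]; ring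
        have hqfAx : qf A x = qf A r := by
          have e1 : qf A k = 0 := by unfold qf; rw [hAk, dotProduct_zero]
          have e2 : k ⬝ᵥ A.mulVec r = 0 := by
            rw [bil_comm hA.1 k r, hAk, dotProduct_zero]
          rw [← hkr, qf_add_vec hA.1, e1, e2]; ring
        have key : qf A r ≤ (CA / δ) * qf B r := by
          rcases eq_or_ne r 0 with hr | hr
          · subst hr
            unfold qf
            simp
          · have hrs : ‖r‖⁻¹ • r ∈ M := by
              refine ⟨?_, Submodule.smul_mem R _ hr1⟩
              simp [norm_smul, norm_ne_zero_iff.mpr hr]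
            have h5 : qf B z ≤ qf B (‖r‖⁻¹ • r) := hzmin hrs
            rw [qf_smul_vec] at h5
            have hrn : (0:ℝ) < ‖r‖ := norm_pos_iff.mpr hr
            have h6 : δ * ‖r‖ ^ 2 ≤ qf B r := by
              have h7 : δ ≤ ‖r‖⁻¹ ^ 2 * qf B r := h5
              have h8 : ‖r‖ ^ 2 * δ ≤ ‖r‖ ^ 2 * (‖r‖⁻¹ ^ 2 * qf B r) :=
                mul_le_mul_of_nonneg_left h7 (by positivity)
              calc δ * ‖r‖ ^ 2 = ‖r‖ ^ 2 * δ := by ring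
                _ ≤ ‖r‖ ^ 2 * (‖r‖⁻¹ ^ 2 * qf B r) := h8
                _ = qf B r := by field_simp
            have h9 : qf A r ≤ CA * ‖r‖ ^ 2 := qf_bound A r
            calc qf A r ≤ CA * ‖r‖ ^ 2 := h9
              _ ≤ (CA / δ) * qf B r := by
                  rw [div_mul_eq_mul_div, le_div_iff₀ hδpos]
                  calc CA * ‖r‖ ^ 2 * δ = CA * (δ * ‖r‖ ^ 2) := by ring
                    _ ≤ CA * qf B r := mul_le_mul_of_nonneg_left h6 hCA0
                    _ = CA * qf B r * 1 := by ring
                    _ ≤ CA * qf B r := by 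
                        have : 0 ≤ CA * qf B r := mul_nonneg hCA0 (hB.2 r)
                        linarith
        rw [qf_sub_mat, qf_smul_mat, hqfAx, hqfBx]
        linarith

end St8
namespace St8

variable {m : ℕ}

section FaceBasics

variable {M : Type*} [AddCommMonoid M] [Module ℝ M]

lemma face_zero_mem {C F : Set M} (hF : IsFaceOf C F) : 0 ∈ F := by
  obtain ⟨⟨a, ha⟩, _, _, hsmul, _⟩ := hF
  have := hsmul a ha 0 (le_refl _)
  rwa [zero_smul] at this

lemma face_add_mem {C F : Set M} (hF : IsFaceOf C F) {a b : M}
    (ha : a ∈ F) (hb : b ∈ F) : a + b ∈ F := by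
  obtain ⟨_, _, hconv, hsmul, _⟩ := hF
  have h1 : (2:ℝ)⁻¹ • a + (2:ℝ)⁻¹ • b ∈ F := by
    have := hconv ha hb (by norm_num : (0:ℝ) ≤ 2⁻¹) (by norm_num : (0:ℝ) ≤ 2⁻¹) (by norm_num)
    simpa using this
  have h2 := hsmul _ h1 2 (by norm_num)
  rw [smul_add, smul_smul, smul_smul] at h2
  norm_num at h2
  exact h2

end FaceBasics

/-- minimal kernel element of a set of PSD matrices -/
lemma exists_min_ker {n : ℕ} (G : Set (Matrix (Fin n) (Fin n) ℝ)) (hG : G ⊆ Sp n)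
    (h0 : (0:Matrix (Fin n) (Fin n) ℝ) ∈ G)
    (hadd : ∀ A ∈ G, ∀ B ∈ G, A + B ∈ G) :
    ∃ B₀ ∈ G, ∀ A ∈ G, kerM B₀ ≤ kerM A := by
  set s : Set ℕ := (fun A => Module.finrank ℝ (kerM A)) '' G with hs
  have hsne : s.Nonempty := ⟨_, 0, h0, rfl⟩
  obtain ⟨B₀, hB₀G, hB₀rk⟩ := Nat.sInf_mem hsne
  refine ⟨B₀, hB₀G, fun A hA => ?_⟩
  have hsum : B₀ + A ∈ G := hadd _ hB₀G _ hA
  have hker : kerM (B₀ + A) = kerM B₀ ⊓ kerM A := kerM_inf (hG hB₀G) (hG hA)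
  have hle : kerM B₀ ⊓ kerM A ≤ kerM B₀ := inf_le_left
  have hrk : Module.finrank ℝ (kerM B₀) ≤ Module.finrank ℝ (kerM (B₀ + A)) := by
    rw [show Module.finrank ℝ (kerM B₀) = sInf s from hB₀rk]
    exact Nat.sInf_le ⟨B₀ + A, hsum, rfl⟩
  rw [hker] at hrk
  have := Submodule.eq_of_le_of_finrank_le hle hrk
  rw [← this]
  exact inf_le_right

/-- the canonical kernel submodule attached to a face -/
def Uof (F : Set (Matrix (Fin (m+1)) (Fin (m+1)) ℝ)) : Submodule ℝ (Fin (m+1) → ℝ) :=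
  ⨅ A ∈ F ∩ Sp (m+1), kerM A

lemma Uof_antitone {F F' : Set (Matrix (Fin (m+1)) (Fin (m+1)) ℝ)} (h : F ⊆ F') :
    Uof F' ≤ Uof F := by
  apply le_iInf₂
  intro A hA
  exact iInf₂_le A ⟨h hA.1, hA.2⟩

/-- a face of COP intersected with the PSD cone is `{A ∈ Sp : Uof F ≤ ker A}` -/
lemma face_capSp {F : Set (Matrix (Fin (m+1)) (Fin (m+1)) ℝ)}
    (hF : IsFaceOf (COPset (soc m)) F) :
    F ∩ Sp (m+1) = {A | A ∈ Sp (m+1) ∧ Uof F ≤ kerM A} := by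
  have hGsub : F ∩ Sp (m+1) ⊆ Sp (m+1) := Set.inter_subset_right
  have hG0 : (0:Matrix (Fin (m+1)) (Fin (m+1)) ℝ) ∈ F ∩ Sp (m+1) :=
    ⟨face_zero_mem hF, Sp_zero⟩
  have hGadd : ∀ A ∈ F ∩ Sp (m+1), ∀ B ∈ F ∩ Sp (m+1), A + B ∈ F ∩ Sp (m+1) := by
    intro A hA B hB
    exact ⟨face_add_mem hF hA.1 hB.1, Sp_add hA.2 hB.2⟩
  obtain ⟨B₀, hB₀G, hB₀min⟩ := exists_min_ker _ hGsub hG0 hGadd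
  have hU : Uof F = kerM B₀ := by
    apply le_antisymm
    · exact iInf₂_le B₀ hB₀G
    · exact le_iInf₂ fun A hA => hB₀min A hA
  ext A
  constructor
  · intro hA
    exact ⟨hA.2, hU ▸ hB₀min A hA⟩
  · rintro ⟨hASp, hAU⟩
    rw [hU] at hAU
    obtain ⟨t, ht0, htB⟩ := psd_dominate hASp (hGsub hB₀G) hAU
    have htB₀F : t • B₀ ∈ F := hF.2.2.2.1 B₀ hB₀G.1 t ht0
    have hsum : A + (t • B₀ - A) ∈ F := by
      have : A + (t • B₀ - A) = t • B₀ := by abel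
      rw [this]; exact htB₀F
    have hmem := hF.2.2.2.2 A (Sp_subset_COP hASp) (t • B₀ - A) (Sp_subset_COP htB) hsum
    exact ⟨hmem.1, hASp⟩

/-- dichotomy/reconstruction: every face of COP is determined by `(Uof F, J ∈ F)`. -/
lemma face_recon (hm : 1 ≤ m) {F : Set (Matrix (Fin (m+1)) (Fin (m+1)) ℝ)}
    (hF : IsFaceOf (COPset (soc m)) F) :
    (Jmat m ∉ F ∧ F = F ∩ Sp (m+1)) ∨
    (Jmat m ∈ F ∧
      F = {A | ∃ P ∈ F ∩ Sp (m+1), ∃ t : ℝ, 0 ≤ t ∧ A = P + t • Jmat m}) := by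
  by_cases hJ : Jmat m ∈ F
  · right
    refine ⟨hJ, ?_⟩
    ext A
    constructor
    · intro hA
      obtain ⟨μ, hμ0, P, hP, hAeq⟩ := slemma hm (hF.2.1 hA)
      have hPC : P ∈ COPset (soc m) := Sp_subset_COP hP
      have hJC : μ • Jmat m ∈ COPset (soc m) := COP_smul Jmat_mem_COP hμ0
      have hsum : P + μ • Jmat m ∈ F := hAeq ▸ hA
      have hPF := (hF.2.2.2.2 P hPC (μ • Jmat m) hJC hsum).1
      exact ⟨P, ⟨hPF, hP⟩, μ, hμ0, hAeq⟩
    · rintro ⟨P, hP, t, ht0, rfl⟩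
      exact face_add_mem hF hP.1 (hF.2.2.2.1 _ hJ t ht0)
  · left
    refine ⟨hJ, ?_⟩
    apply le_antisymm
    · intro A hA
      obtain ⟨μ, hμ0, P, hP, hAeq⟩ := slemma hm (hF.2.1 hA)
      rcases eq_or_lt_of_le hμ0 with hμz | hμpos
      · refine ⟨hA, ?_⟩
        rw [hAeq, ← hμz, zero_smul, add_zero]
        exact hP
      · exfalso
        apply hJ
        have hPC : P ∈ COPset (soc m) := Sp_subset_COP hP
        have hJC : μ • Jmat m ∈ COPset (soc m) := COP_smul Jmat_mem_COP (le_of_lt hμpos)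
        have hsum : P + μ • Jmat m ∈ F := hAeq ▸ hA
        have hμJF := (hF.2.2.2.2 P hPC (μ • Jmat m) hJC hsum).2
        have := hF.2.2.2.1 _ hμJF μ⁻¹ (le_of_lt (inv_pos.mpr hμpos))
        rwa [smul_smul, inv_mul_cancel₀ (ne_of_gt hμpos), one_smul] at this
    · exact Set.inter_subset_left

/-- the chain-length bound -/
lemma chain_bound (hm : 1 ≤ m) (l : ℕ)
    (F : Fin l → Set (Matrix (Fin (m+1)) (Fin (m+1)) ℝ))
    (hmono : StrictMono F) (hface : ∀ i, IsFaceOf (COPset (soc m)) (F i)) :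
    l ≤ m + 3 := by
  classical
  set φ : Fin l → ℕ := fun k =>
    (m + 1 - Module.finrank ℝ (Uof (F k))) + (if Jmat m ∈ F k then 1 else 0) with hφ
  have hφmono : StrictMono φ := by
    intro k k' hkk
    have hss : F k < F k' := hmono hkk
    have hsub : F k ⊆ F k' := le_of_lt hss
    have hUle : Uof (F k') ≤ Uof (F k) := Uof_antitone hsub
    have hJle : Jmat m ∈ F k → Jmat m ∈ F k' := fun h => hsub h
    have hrk' : Module.finrank ℝ (Uof (F k)) ≤ m + 1 := by
      have := Submodule.finrank_le (Uof (F k))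
      rwa [show Module.finrank ℝ (Fin (m+1) → ℝ) = m + 1 by simp [Module.finrank_pi]] at this
    rcases eq_or_lt_of_le hUle with hUeq | hUlt
    · -- kernels equal; J-membership must differ
      have hGeq : F k ∩ Sp (m+1) = F k' ∩ Sp (m+1) := by
        rw [face_capSp (hface k), face_capSp (hface k'), hUeq]
      have hJne : ¬ (Jmat m ∈ F k ↔ Jmat m ∈ F k') := by
        intro hiff
        apply ne_of_lt hss
        rcases face_recon hm (hface k) with ⟨hJk, hFk⟩ | ⟨hJk, hFk⟩ <;>
          rcases face_recon hm (hface k') with ⟨hJk', hFk'⟩ | ⟨hJk', hFk'⟩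
        · rw [hFk, hFk', hGeq]
        · exact absurd (hiff.mpr hJk') hJk
        · exact absurd (hiff.mp hJk) hJk'
        · rw [hFk, hFk', hGeq]
      have hJk : Jmat m ∉ F k := by
        intro h
        exact hJne ⟨fun _ => hJle h, fun _ => h⟩
      have hJk' : Jmat m ∈ F k' := by
        by_contra h
        exact hJne ⟨fun hh => absurd hh hJk, fun hh => absurd hh h⟩
      show (m + 1 - Module.finrank ℝ (Uof (F k))) + (if Jmat m ∈ F k then 1 else 0)
        < (m + 1 - Module.finrank ℝ (Uof (F k'))) + (if Jmat m ∈ F k' then 1 else 0)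
      rw [hUeq, if_neg hJk, if_pos hJk']
      omega
    · have hrklt : Module.finrank ℝ (Uof (F k')) < Module.finrank ℝ (Uof (F k)) :=
        Submodule.finrank_lt_finrank_of_lt hUlt
      show (m + 1 - Module.finrank ℝ (Uof (F k))) + (if Jmat m ∈ F k then 1 else 0)
        < (m + 1 - Module.finrank ℝ (Uof (F k'))) + (if Jmat m ∈ F k' then 1 else 0)
      have h1 : (if Jmat m ∈ F k then 1 else 0) ≤ (if Jmat m ∈ F k' then (1:ℕ) else 0) := by
        by_cases h : Jmat m ∈ F k
        · rw [if_pos h, if_pos (hJle h)]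
        · rw [if_neg h]; omega
      omega
  have hφbd : ∀ k, φ k ≤ m + 2 := by
    intro k
    show (m + 1 - Module.finrank ℝ (Uof (F k))) + (if Jmat m ∈ F k then 1 else 0) ≤ m + 2
    have h1 : (if Jmat m ∈ F k then 1 else 0) ≤ 1 := by split <;> omega
    omega
  have hinj : Function.Injective (fun k : Fin l => (⟨φ k, by
      have := hφbd k; omega⟩ : Fin (m + 3))) := by
    intro a b hab
    by_contra hne
    rcases lt_or_gt_of_ne hne with h | h
    · exact absurd (congrArg Fin.val hab) (ne_of_lt (hφmono h))
    · exact absurd (congrArg Fin.val hab).symm (ne_of_lt (hφmono h))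
  have := Fintype.card_le_of_injective _ hinj
  simpa using this

end St8
namespace St8

variable {m : ℕ}

/-- the null vector (1,1,0,…,0) -/
def xv (m : ℕ) : Fin (m+1) → ℝ := fun i => if (i:ℕ) = 0 then 1 else if (i:ℕ) = 1 then 1 else 0
/-- the null vector (1,-1,0,…,0) -/
def xv' (m : ℕ) : Fin (m+1) → ℝ := fun i => if (i:ℕ) = 0 then 1 else if (i:ℕ) = 1 then -1 else 0

lemma sum_ite_succ_eq (p : Fin (m+1)) (hp : p ≠ 0) (f : Fin (m+1) → ℝ)
    (hf : ∀ i : Fin m, i.succ ≠ p → f i.succ = 0) :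
    ∑ i : Fin m, f i.succ = f p := by
  have hpv : (p:ℕ) ≠ 0 := fun h => hp (Fin.ext h)
  have hplt : (p:ℕ) - 1 < m := by have := p.isLt; omega
  set i0 : Fin m := ⟨(p:ℕ) - 1, hplt⟩ with hi0def
  have hi0 : i0.succ = p := by
    apply Fin.ext
    rw [Fin.val_succ]
    show (p:ℕ) - 1 + 1 = (p:ℕ)
    omega
  rw [Finset.sum_eq_single i0]
  · rw [hi0]
  · intro i _ hne
    apply hf
    intro hc
    rw [← hi0] at hc
    exact hne (Fin.succ_injective _ hc)
  · intro h; exact absurd (Finset.mem_univ _) h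

lemma sum_split01 (hm : 1 ≤ m) (g : Fin (m+1) → ℝ)
    (hg : ∀ i : Fin (m+1), (i:ℕ) ≠ 0 → (i:ℕ) ≠ 1 → g i = 0) :
    ∑ i, g i = g 0 + g ⟨1, by omega⟩ := by
  rw [Fin.sum_univ_succ]
  congr 1
  apply sum_ite_succ_eq (⟨1, by omega⟩ : Fin (m+1)) (by
    intro h
    have := congrArg Fin.val h
    simp at this)
  intro i hne
  apply hg
  · rw [Fin.val_succ]; omega
  · rw [Fin.val_succ]
    intro hc
    exact hne (Fin.ext (show (i:ℕ) + 1 = 1 by omega))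

lemma sum_ite_succ_eq2 (p q : Fin (m+1)) (hp : p ≠ 0) (hq : q ≠ 0) (hpq : p ≠ q)
    (f : Fin (m+1) → ℝ)
    (hf : ∀ i : Fin m, i.succ ≠ p → i.succ ≠ q → f i.succ = 0) :
    ∑ i : Fin m, f i.succ = f p + f q := by
  have hpv : (p:ℕ) ≠ 0 := fun h => hp (Fin.ext h)
  have hqv : (q:ℕ) ≠ 0 := fun h => hq (Fin.ext h)
  have hplt : (p:ℕ) - 1 < m := by have := p.isLt; omega
  have hqlt : (q:ℕ) - 1 < m := by have := q.isLt; omega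
  set ip : Fin m := ⟨(p:ℕ) - 1, hplt⟩ with hipdef
  set iq : Fin m := ⟨(q:ℕ) - 1, hqlt⟩ with hiqdef
  have hip : ip.succ = p := by
    apply Fin.ext; rw [Fin.val_succ]; show (p:ℕ) - 1 + 1 = (p:ℕ); omega
  have hiq : iq.succ = q := by
    apply Fin.ext; rw [Fin.val_succ]; show (q:ℕ) - 1 + 1 = (q:ℕ); omega
  have hne : ip ≠ iq := by
    intro h
    apply hpq
    rw [← hip, ← hiq, h]
  rw [← hip, ← hiq]
  have hz : ∀ c ∈ (Finset.univ : Finset (Fin m)), c ∉ ({ip, iq} : Finset (Fin m)) →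
      (fun i : Fin m => f i.succ) c = 0 := by
    intro c _ hc
    simp only [Finset.mem_insert, Finset.mem_singleton] at hc
    push_neg at hc
    apply hf
    · intro h; exact hc.1 (Fin.succ_injective _ (h.trans hip.symm))
    · intro h; exact hc.2 (Fin.succ_injective _ (h.trans hiq.symm))
  rw [← Finset.sum_subset (Finset.subset_univ ({ip, iq} : Finset (Fin m))) hz]
  rw [Finset.sum_pair hne]

lemma bil_single (A : Matrix (Fin (m+1)) (Fin (m+1)) ℝ) (p q : Fin (m+1)) :
    Pi.single p (1:ℝ) ⬝ᵥ A.mulVec (Pi.single q 1) = A p q := by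
  rw [single_dotProduct, one_mul, mulVec_single]
  simp

lemma vecMulVec_mulVec' (v u : Fin (m+1) → ℝ) :
    (vecMulVec v v).mulVec u = (v ⬝ᵥ u) • v := by
  funext i
  show ∑ j, vecMulVec v v i j * u j = (∑ j, v j * u j) * v i
  rw [Finset.sum_mul]
  apply Finset.sum_congr rfl
  intro j _
  rw [vecMulVec_apply]
  ring

lemma vecMulVec_Sp (v : Fin (m+1) → ℝ) : vecMulVec v v ∈ Sp (m+1) := by
  constructor
  · unfold Matrix.IsSymm
    ext i j
    rw [transpose_apply, vecMulVec_apply, vecMulVec_apply]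
    ring
  · intro x
    unfold qf
    rw [vecMulVec_mulVec', dotProduct_smul, smul_eq_mul, dotProduct_comm x v]
    exact mul_self_nonneg _

/-- J acting on the basic vectors -/
lemma J_mulVec_xv' (hm : 1 ≤ m) : (Jmat m).mulVec (xv' m) = xv m := by
  funext i
  show ((Matrix.diagonal fun i : Fin (m+1) => if i = 0 then (1:ℝ) else -1).mulVec (xv' m)) i = _
  rw [mulVec_diagonal]
  by_cases h0 : i = 0
  · subst h0
    simp [xv, xv']
  · have h0v : (i:ℕ) ≠ 0 := fun h => h0 (Fin.ext h)
    rw [if_neg h0]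
    by_cases h1 : (i:ℕ) = 1
    · simp [xv, xv', h0v, h1]
    · simp [xv, xv', h0v, h1]

lemma J_mulVec_single (p : Fin (m+1)) (hp : p ≠ 0) :
    (Jmat m).mulVec (Pi.single p (1:ℝ)) = (-1 : ℝ) • (Pi.single p 1 : Fin (m+1) → ℝ) := by
  funext i
  show ((Matrix.diagonal fun i : Fin (m+1) => if i = 0 then (1:ℝ) else -1).mulVec _) i = _
  rw [mulVec_diagonal]
  by_cases hip : i = p
  · subst hip
    rw [if_neg hp, Pi.single_eq_same]
    simp
  · rw [Pi.single_eq_of_ne hip]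
    simp [Pi.single_eq_of_ne hip]

lemma xv_zero_val : xv m 0 = 1 := by simp [xv]
lemma xv'_zero_val : xv' m 0 = 1 := by simp [xv']
lemma xv_one_val (hm : 1 ≤ m) : xv m ⟨1, by omega⟩ = 1 := by simp [xv]
lemma xv'_one_val (hm : 1 ≤ m) : xv' m ⟨1, by omega⟩ = -1 := by simp [xv']
lemma xv_other {i : Fin (m+1)} (h0 : (i:ℕ) ≠ 0) (h1 : (i:ℕ) ≠ 1) : xv m i = 0 := by
  simp [xv, h0, h1]
lemma xv'_other {i : Fin (m+1)} (h0 : (i:ℕ) ≠ 0) (h1 : (i:ℕ) ≠ 1) : xv' m i = 0 := by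
  simp [xv', h0, h1]

lemma xv_dot_xv' (hm : 1 ≤ m) : xv m ⬝ᵥ xv' m = 0 := by
  unfold dotProduct
  rw [sum_split01 hm _ (fun i h0 h1 => by rw [xv_other h0 h1]; ring)]
  rw [xv_zero_val, xv'_zero_val, xv_one_val hm, xv'_one_val hm]
  ring

lemma xv_dot_xv (hm : 1 ≤ m) : xv m ⬝ᵥ xv m = 2 := by
  unfold dotProduct
  rw [sum_split01 hm _ (fun i h0 h1 => by rw [xv_other h0 h1]; ring)]
  rw [xv_zero_val, xv_one_val hm]
  ring

lemma qf_J_xv' (hm : 1 ≤ m) : qf (Jmat m) (xv' m) = 0 := by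
  unfold qf
  rw [J_mulVec_xv' hm]
  rw [dotProduct_comm]
  exact xv_dot_xv' hm

/-- the faces used in the chain -/
def FaceU (m : ℕ) (U : Submodule ℝ (Fin (m+1) → ℝ)) : Set (Matrix (Fin (m+1)) (Fin (m+1)) ℝ) :=
  {A | ∃ S ∈ Sp (m+1), (∀ u ∈ U, S.mulVec u = 0) ∧ ∃ t : ℝ, 0 ≤ t ∧ A = S + t • Jmat m}

lemma FaceU_zero_mem (U : Submodule ℝ (Fin (m+1) → ℝ)) : (0:Matrix (Fin (m+1)) (Fin (m+1)) ℝ) ∈ FaceU m U :=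
  ⟨0, Sp_zero, fun u _ => by simp, 0, le_refl _, by simp⟩

lemma FaceU_subset_COP (U : Submodule ℝ (Fin (m+1) → ℝ)) : FaceU m U ⊆ COPset (soc m) := by
  rintro A ⟨S, hS, _, t, ht, rfl⟩
  exact COP_add (Sp_subset_COP hS) (COP_smul Jmat_mem_COP ht)

lemma FaceU_antitone {U U' : Submodule ℝ (Fin (m+1) → ℝ)} (h : U' ≤ U) :
    FaceU m U ⊆ FaceU m U' := by
  rintro A ⟨S, hS, hker, t, ht, rfl⟩
  exact ⟨S, hS, fun u hu => hker u (h hu), t, ht, rfl⟩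

lemma FaceU_add {U : Submodule ℝ (Fin (m+1) → ℝ)}
    {A B : Matrix (Fin (m+1)) (Fin (m+1)) ℝ} (hA : A ∈ FaceU m U) (hB : B ∈ FaceU m U) :
    A + B ∈ FaceU m U := by
  obtain ⟨S1, hS1, hk1, t1, ht1, rfl⟩ := hA
  obtain ⟨S2, hS2, hk2, t2, ht2, rfl⟩ := hB
  refine ⟨S1 + S2, Sp_add hS1 hS2, fun u hu => by rw [add_mulVec, hk1 u hu, hk2 u hu, add_zero],
    t1 + t2, by linarith, ?_⟩
  rw [add_smul]
  abel

lemma FaceU_smul {U : Submodule ℝ (Fin (m+1) → ℝ)}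
    {A : Matrix (Fin (m+1)) (Fin (m+1)) ℝ} (hA : A ∈ FaceU m U) {c : ℝ} (hc : 0 ≤ c) :
    c • A ∈ FaceU m U := by
  obtain ⟨S, hS, hk, t, ht, rfl⟩ := hA
  refine ⟨c • S, Sp_smul hS hc, fun u hu => by rw [smul_mulVec, hk u hu, smul_zero],
    c * t, mul_nonneg hc ht, ?_⟩
  rw [smul_add, smul_smul]

/-- LEMMA E: `FaceU` is a face when `xv'` lies in `U`. -/
lemma FaceU_isFace (hm : 1 ≤ m) (U : Submodule ℝ (Fin (m+1) → ℝ)) (hx' : xv' m ∈ U) :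
    IsFaceOf (COPset (soc m)) (FaceU m U) := by
  refine ⟨⟨0, FaceU_zero_mem U⟩, FaceU_subset_COP U, ?_, ?_, ?_⟩
  · -- convexity
    intro A hA B hB a b ha hb hab
    exact FaceU_add (FaceU_smul hA ha) (FaceU_smul hB hb)
  · intro A hA c hc
    exact FaceU_smul hA hc
  · -- extremality
    intro A hA B hB hsum
    obtain ⟨S, hS, hSker, t, ht, hABeq⟩ := hsum
    obtain ⟨μ, hμ0, P, hP, hAeq⟩ := slemma hm hA
    obtain ⟨ν, hν0, Q, hQ, hBeq⟩ := slemma hm hB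
    have hPQ : P + Q = S + (t - μ - ν) • Jmat m := by
      have h : (P + μ • Jmat m) + (Q + ν • Jmat m) = S + t • Jmat m := by
        rw [← hAeq, ← hBeq]; exact hABeq
      have h2 : P + Q = ((P + μ • Jmat m) + (Q + ν • Jmat m)) - μ • Jmat m - ν • Jmat m := by
        abel
      rw [h2, h, sub_smul, sub_smul]
      abel
    have hSx' : S.mulVec (xv' m) = 0 := hSker _ hx'
    have hqS : qf S (xv' m) = 0 := by unfold qf; rw [hSx', dotProduct_zero]
    have hqJ : qf (Jmat m) (xv' m) = 0 := qf_J_xv' hm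
    have hqPQ : qf P (xv' m) + qf Q (xv' m) = 0 := by
      have h3 : qf (P + Q) (xv' m) = qf (S + (t - μ - ν) • Jmat m) (xv' m) := by rw [hPQ]
      rw [qf_add_mat, qf_add_mat, qf_smul_mat, hqS, hqJ] at h3
      rw [h3]; ring
    have hqP : qf P (xv' m) = 0 := le_antisymm (by linarith [hQ.2 (xv' m)]) (hP.2 _)
    have hqQ : qf Q (xv' m) = 0 := by linarith
    have hPx' : P.mulVec (xv' m) = 0 := psd_kernel hP hqP
    have hQx' : Q.mulVec (xv' m) = 0 := psd_kernel hQ hqQ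
    have hs0 : t - μ - ν = 0 := by
      have h0 : (P + Q).mulVec (xv' m) = S.mulVec (xv' m)
          + ((t - μ - ν) • Jmat m).mulVec (xv' m) := by
        rw [hPQ, add_mulVec]
      rw [add_mulVec, hPx', hQx', hSx', smul_mulVec, J_mulVec_xv' hm] at h0
      have h1 := congrFun h0 0
      simp only [Pi.add_apply, Pi.zero_apply, Pi.smul_apply, smul_eq_mul, zero_add, add_zero] at h1
      rw [xv_zero_val] at h1
      linarith [h1.symm]
    have hPQS : P + Q = S := by
      rw [hPQ, hs0, zero_smul, add_zero]
    have hkerP : ∀ u ∈ U, P.mulVec u = 0 := by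
      intro u hu
      have hSu : S.mulVec u = 0 := hSker u hu
      have hqSu : qf S u = 0 := by unfold qf; rw [hSu, dotProduct_zero]
      have h4 : qf P u + qf Q u = 0 := by
        have := congrArg (fun M => qf M u) hPQS
        rw [qf_add_mat] at this
        rw [this, hqSu]
      have h5 : qf P u = 0 := le_antisymm (by linarith [hQ.2 u]) (hP.2 _)
      exact psd_kernel hP h5
    have hkerQ : ∀ u ∈ U, Q.mulVec u = 0 := by
      intro u hu
      have hSu : S.mulVec u = 0 := hSker u hu
      have hqSu : qf S u = 0 := by unfold qf; rw [hSu, dotProduct_zero]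
      have h4 : qf P u + qf Q u = 0 := by
        have := congrArg (fun M => qf M u) hPQS
        rw [qf_add_mat] at this
        rw [this, hqSu]
      have h5 : qf Q u = 0 := le_antisymm (by linarith [hP.2 u]) (hQ.2 _)
      exact psd_kernel hQ h5
    exact ⟨⟨P, hP, hkerP, μ, hμ0, hAeq⟩, ⟨Q, hQ, hkerQ, ν, hν0, hBeq⟩⟩

end St8
namespace St8

variable {m : ℕ}

lemma qf_neg_mat (A : Matrix (Fin (m+1)) (Fin (m+1)) ℝ) (x : Fin (m+1) → ℝ) :
    qf (-A) x = -qf A x := by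
  simp [qf, neg_mulVec, dotProduct_neg]

/-- polarization: a symmetric quadratic form vanishing on the cone is zero -/
lemma zero_of_qf_soc (hm : 1 ≤ m) {A : Matrix (Fin (m+1)) (Fin (m+1)) ℝ} (hs : A.IsSymm)
    (h : ∀ x ∈ soc m, qf A x = 0) : A = 0 := by
  have hsym : ∀ p q : Fin (m+1), A q p = A p q := by
    intro p q
    conv_lhs => rw [← hs.eq]
    rfl
  have he0soc : (Pi.single 0 1 : Fin (m+1) → ℝ) ∈ soc m := by
    rw [mem_soc_iff]
    constructor
    · rw [Pi.single_eq_same]; norm_num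
    · have : ∀ i : Fin m, (Pi.single 0 1 : Fin (m+1) → ℝ) i.succ ^ 2 = 0 := by
        intro i
        rw [Pi.single_eq_of_ne (Fin.succ_ne_zero i)]
        norm_num
      rw [Finset.sum_congr rfl (fun i _ => this i), Pi.single_eq_same]
      norm_num
  have hA00 : A 0 0 = 0 := by
    have := h _ he0soc
    rwa [show qf A (Pi.single 0 1) = A 0 0 from bil_single A 0 0] at this
  have hoff : ∀ p : Fin (m+1), p ≠ 0 → (A 0 p = 0 ∧ A p p = 0) := by
    intro p hp
    have hsp0 : (Pi.single p 1 : Fin (m+1) → ℝ) 0 = 0 := Pi.single_eq_of_ne (Ne.symm hp) 1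
    have he0p : (Pi.single 0 1 : Fin (m+1) → ℝ) p = 0 := Pi.single_eq_of_ne hp 1
    have hmem : ∀ c : ℝ, c^2 ≤ 4 →
        ((2:ℝ) • (Pi.single 0 1 : Fin (m+1) → ℝ) + c • (Pi.single p 1 : Fin (m+1) → ℝ)) ∈ soc m := by
      intro c hc
      rw [mem_soc_iff]
      have hv0 : ((2:ℝ) • (Pi.single 0 1 : Fin (m+1) → ℝ) + c • (Pi.single p 1 : Fin (m+1) → ℝ)) 0 = 2 := by
        simp [hsp0, Pi.single_eq_same]
      constructor
      · rw [hv0]; norm_num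
      · rw [hv0]
        have hsum : ∑ i : Fin m,
            ((2:ℝ) • (Pi.single 0 1 : Fin (m+1) → ℝ) + c • (Pi.single p 1 : Fin (m+1) → ℝ)) i.succ ^ 2
            = ((2:ℝ) • (Pi.single 0 1 : Fin (m+1) → ℝ) + c • (Pi.single p 1 : Fin (m+1) → ℝ)) p ^ 2 := by
          refine sum_ite_succ_eq p hp
            (fun y => ((2:ℝ) • (Pi.single 0 1 : Fin (m+1) → ℝ)
              + c • (Pi.single p 1 : Fin (m+1) → ℝ)) y ^ 2) ?_
          intro i hne
          simp [Pi.single_eq_of_ne (Fin.succ_ne_zero i), Pi.single_eq_of_ne hne]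
        rw [hsum]
        have : ((2:ℝ) • (Pi.single 0 1 : Fin (m+1) → ℝ) + c • (Pi.single p 1 : Fin (m+1) → ℝ)) p = c := by
          simp [he0p, Pi.single_eq_same]
        rw [this]
        nlinarith
    have hq : ∀ c : ℝ, qf A ((2:ℝ) • (Pi.single 0 1 : Fin (m+1) → ℝ) + c • (Pi.single p 1 : Fin (m+1) → ℝ))
        = 4 * A 0 0 + 4 * c * A 0 p + c^2 * A p p := by
      intro c
      rw [qf_combo hs 2 c]
      rw [show qf A (Pi.single 0 1) = A 0 0 from bil_single A 0 0]
      rw [show qf A (Pi.single p 1) = A p p from bil_single A p p]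
      rw [bil_single A 0 p]
      ring
    have h1 := h _ (hmem 1 (by norm_num))
    rw [hq 1] at h1
    have h2 := h _ (hmem (-1) (by norm_num))
    rw [hq (-1)] at h2
    constructor <;> nlinarith
  have hoff2 : ∀ p q : Fin (m+1), p ≠ 0 → q ≠ 0 → p ≠ q → A p q = 0 := by
    intro p q hp hq hpq
    have hsp0 : (Pi.single p 1 : Fin (m+1) → ℝ) 0 = 0 := Pi.single_eq_of_ne (Ne.symm hp) 1
    have hsq0 : (Pi.single q 1 : Fin (m+1) → ℝ) 0 = 0 := Pi.single_eq_of_ne (Ne.symm hq) 1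
    have he0p : (Pi.single 0 1 : Fin (m+1) → ℝ) p = 0 := Pi.single_eq_of_ne hp 1
    have he0q : (Pi.single 0 1 : Fin (m+1) → ℝ) q = 0 := Pi.single_eq_of_ne hq 1
    have hqp : (Pi.single q 1 : Fin (m+1) → ℝ) p = 0 := Pi.single_eq_of_ne hpq 1
    have hpq' : (Pi.single p 1 : Fin (m+1) → ℝ) q = 0 := Pi.single_eq_of_ne (Ne.symm hpq) 1
    set u : Fin (m+1) → ℝ :=
      (2:ℝ) • (Pi.single 0 1 : Fin (m+1) → ℝ) + (1:ℝ) • ((Pi.single p 1 : Fin (m+1) → ℝ) + Pi.single q 1)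
      with hu
    have humem : u ∈ soc m := by
      rw [mem_soc_iff]
      have hu0 : u 0 = 2 := by simp [hu, hsp0, hsq0, Pi.single_eq_same]
      constructor
      · rw [hu0]; norm_num
      · rw [hu0]
        have hsum : ∑ i : Fin m, u i.succ ^ 2 = u p ^ 2 + u q ^ 2 := by
          refine sum_ite_succ_eq2 p q hp hq hpq (fun y => u y ^ 2) ?_
          intro i hne1 hne2
          simp [hu, Pi.single_eq_of_ne (Fin.succ_ne_zero i), Pi.single_eq_of_ne hne1,
            Pi.single_eq_of_ne hne2]
        rw [hsum]
        have hup : u p = 1 := by simp [hu, he0p, Pi.single_eq_same, hqp]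
        have huq : u q = 1 := by simp [hu, he0q, Pi.single_eq_same, hpq']
        rw [hup, huq]; norm_num
    have hbil : (Pi.single 0 1 : Fin (m+1) → ℝ) ⬝ᵥ A.mulVec ((Pi.single p 1 : Fin (m+1) → ℝ) + Pi.single q 1)
        = A 0 p + A 0 q := by
      rw [mulVec_add, dotProduct_add, bil_single, bil_single]
    have hqpq : qf A ((Pi.single p 1 : Fin (m+1) → ℝ) + Pi.single q 1) = A p p + 2 * A p q + A q q := by
      rw [qf_add_vec hs]
      rw [show qf A (Pi.single p 1) = A p p from bil_single A p p]
      rw [show qf A (Pi.single q 1) = A q q from bil_single A q q]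
      rw [bil_single A p q]
    have hquf : qf A u = 4 * A 0 0 + 4 * (A 0 p + A 0 q) + (A p p + 2 * A p q + A q q) := by
      rw [hu, qf_combo hs 2 1]
      rw [show qf A (Pi.single 0 1) = A 0 0 from bil_single A 0 0]
      rw [hbil, hqpq]
      ring
    have h0 := h u humem
    rw [hquf] at h0
    have hp1 := hoff p hp
    have hq1 := hoff q hq
    nlinarith [hp1.1, hp1.2, hq1.1, hq1.2, hA00]
  ext p q
  rw [Matrix.zero_apply]
  rcases eq_or_ne p 0 with rfl | hp
  · rcases eq_or_ne q 0 with rfl | hq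
    · exact hA00
    · exact (hoff q hq).1
  · rcases eq_or_ne q 0 with rfl | hq
    · rw [hsym 0 p]; exact (hoff p hp).1
    · rcases eq_or_ne p q with rfl | hpq
      · exact (hoff p hp).2
      · exact hoff2 p q hp hq hpq

lemma zero_isFace (hm : 1 ≤ m) :
    IsFaceOf (COPset (soc m)) ({0} : Set (Matrix (Fin (m+1)) (Fin (m+1)) ℝ)) := by
  refine ⟨⟨0, rfl⟩, ?_, ?_, ?_, ?_⟩
  · intro A hA
    rw [Set.mem_singleton_iff] at hA
    subst hA
    exact COP_zero
  · intro x hx y hy a b _ _ _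
    rw [Set.mem_singleton_iff] at hx hy
    subst hx; subst hy
    simp
  · intro x hx c _
    rw [Set.mem_singleton_iff] at hx
    subst hx
    simp
  · intro A hA B hB hsum
    rw [Set.mem_singleton_iff] at hsum
    have hBA : B = -A := by
      rw [← sub_eq_zero]
      rw [show B - -A = A + B by abel, hsum]
    have hAz : ∀ x ∈ soc m, qf A x = 0 := by
      intro x hx
      have h1 : 0 ≤ qf A x := hA.2 x hx
      have h2 : 0 ≤ qf B x := hB.2 x hx
      rw [hBA, qf_neg_mat] at h2
      linarith
    have hA0 : A = 0 := zero_of_qf_soc hm hA.1 hAz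
    constructor
    · rw [Set.mem_singleton_iff]; exact hA0
    · rw [Set.mem_singleton_iff, hBA, hA0]; simp

lemma COP_isFace : IsFaceOf (COPset (soc m)) (COPset (soc m)) :=
  ⟨⟨0, COP_zero⟩, subset_rfl,
    fun _ hx _ hy _ _ ha hb _ => COP_add (COP_smul hx ha) (COP_smul hy hb),
    fun _ hx _ hc => COP_smul hx hc,
    fun _ ha _ hb _ => ⟨ha, hb⟩⟩

/-- generating sets for the chain submodules -/
def genSet (m j : ℕ) : Set (Fin (m+1) → ℝ) :=
  {xv' m} ∪ {v | ∃ i : Fin (m+1), j < (i:ℕ) ∧ v = Pi.single i 1}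
    ∪ (if j = 0 then {xv m} else ∅)

def Uj (m j : ℕ) : Submodule ℝ (Fin (m+1) → ℝ) := Submodule.span ℝ (genSet m j)

lemma xv'_mem_genSet (j : ℕ) : xv' m ∈ genSet m j := Or.inl (Or.inl rfl)

lemma xv'_mem_Uj (j : ℕ) : xv' m ∈ Uj m j :=
  Submodule.subset_span (xv'_mem_genSet j)

lemma genSet_antitone {j j' : ℕ} (h : j ≤ j') : genSet m j' ⊆ genSet m j := by
  rintro v ((hv | hv) | hv)
  · exact Or.inl (Or.inl hv)
  · obtain ⟨i, hi, rfl⟩ := hv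
    exact Or.inl (Or.inr ⟨i, by omega, rfl⟩)
  · by_cases hj' : j' = 0
    · rw [if_pos hj'] at hv
      have hj : j = 0 := by omega
      right
      rw [if_pos hj]
      exact hv
    · rw [if_neg hj'] at hv
      exact absurd hv (Set.notMem_empty v)

lemma Uj_antitone {j j' : ℕ} (h : j ≤ j') : Uj m j' ≤ Uj m j :=
  Submodule.span_mono (genSet_antitone h)

lemma FaceU_mem_of_gen {j : ℕ} {S : Matrix (Fin (m+1)) (Fin (m+1)) ℝ} (hS : S ∈ Sp (m+1))
    (hgen : ∀ v ∈ genSet m j, S.mulVec v = 0) : S ∈ FaceU m (Uj m j) := by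
  refine ⟨S, hS, ?_, 0, le_refl _, by simp⟩
  intro u hu
  have hle : Uj m j ≤ kerM S := Submodule.span_le.mpr (fun v hv => mem_kerM.mpr (hgen v hv))
  exact mem_kerM.mp (hle hu)

lemma FaceU_cases {j : ℕ} {A : Matrix (Fin (m+1)) (Fin (m+1)) ℝ}
    (hA : A ∈ FaceU m (Uj m j)) :
    ∃ (S : Matrix (Fin (m+1)) (Fin (m+1)) ℝ) (t : ℝ), S ∈ Sp (m+1)
      ∧ (∀ v ∈ genSet m j, S.mulVec v = 0) ∧ 0 ≤ t ∧ A = S + t • Jmat m := by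
  obtain ⟨S, hS, hker, t, ht, rfl⟩ := hA
  exact ⟨S, t, hS, fun v hv => hker v (Submodule.subset_span hv), ht, rfl⟩

lemma Jmat_mem_FaceU (j : ℕ) : Jmat m ∈ FaceU m (Uj m j) :=
  ⟨0, Sp_zero, fun u _ => by simp, 1, by norm_num, by simp⟩

lemma step0 (hm : 1 ≤ m) :
    ({0} : Set (Matrix (Fin (m+1)) (Fin (m+1)) ℝ)) < FaceU m (Uj m 0) := by
  apply lt_of_le_of_ne
  · intro A hA
    rw [Set.mem_singleton_iff] at hA
    subst hA
    exact FaceU_zero_mem _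
  · intro hEq
    have hJ : Jmat m ∈ FaceU m (Uj m 0) := Jmat_mem_FaceU 0
    rw [← hEq, Set.mem_singleton_iff] at hJ
    have h1 := congrFun (congrFun hJ 0) 0
    rw [Matrix.zero_apply] at h1
    unfold Jmat at h1
    rw [Matrix.diagonal_apply_eq] at h1
    norm_num at h1

lemma step1 (hm : 1 ≤ m) : FaceU m (Uj m 0) < FaceU m (Uj m 1) := by
  apply lt_of_le_of_ne (FaceU_antitone (Uj_antitone (by omega)))
  intro hEq
  have hXmem : vecMulVec (xv m) (xv m) ∈ FaceU m (Uj m 1) := by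
    apply FaceU_mem_of_gen (vecMulVec_Sp _)
    rintro v ((hv | hv) | hv)
    · rw [Set.mem_singleton_iff] at hv
      subst hv
      rw [vecMulVec_mulVec', xv_dot_xv' hm, zero_smul]
    · obtain ⟨i, hi, rfl⟩ := hv
      rw [vecMulVec_mulVec', dotProduct_single, mul_one,
        xv_other (by omega) (by omega), zero_smul]
    · rw [if_neg (by norm_num)] at hv
      exact absurd hv (Set.notMem_empty _)
  rw [← hEq] at hXmem
  obtain ⟨S, t, hS, hker, ht, heq⟩ := FaceU_cases hXmem
  have hXxv' : (vecMulVec (xv m) (xv m)).mulVec (xv' m) = 0 := by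
    rw [vecMulVec_mulVec', xv_dot_xv' hm, zero_smul]
  have h1 : (vecMulVec (xv m) (xv m)).mulVec (xv' m)
      = S.mulVec (xv' m) + t • ((Jmat m).mulVec (xv' m)) := by
    rw [heq, add_mulVec, smul_mulVec]
  rw [hXxv', hker _ (xv'_mem_genSet 0), J_mulVec_xv' hm, zero_add] at h1
  have ht0 : t = 0 := by
    have h2 := congrFun h1.symm 0
    simp only [Pi.zero_apply, Pi.smul_apply, smul_eq_mul] at h2
    rw [xv_zero_val] at h2
    linarith
  have hxmem : xv m ∈ genSet m 0 := by
    right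
    rw [if_pos rfl]
    exact rfl
  have h3 : (vecMulVec (xv m) (xv m)).mulVec (xv m)
      = S.mulVec (xv m) + t • ((Jmat m).mulVec (xv m)) := by
    rw [heq, add_mulVec, smul_mulVec]
  rw [hker _ hxmem, ht0, zero_smul, add_zero, vecMulVec_mulVec', xv_dot_xv hm] at h3
  have h4 := congrFun h3 0
  simp only [Pi.zero_apply, Pi.smul_apply, smul_eq_mul] at h4
  rw [xv_zero_val] at h4
  linarith

lemma stepj (hm : 1 ≤ m) (j : ℕ) (hj2 : 2 ≤ j) (hjm : j ≤ m) :
    FaceU m (Uj m (j-1)) < FaceU m (Uj m j) := by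
  apply lt_of_le_of_ne (FaceU_antitone (Uj_antitone (by omega)))
  intro hEq
  have hjlt : j < m + 1 := by omega
  set p : Fin (m+1) := ⟨j, hjlt⟩ with hpdef
  have hpval : (p : ℕ) = j := rfl
  have hp0 : p ≠ 0 := by
    apply Fin.ne_of_val_ne
    rw [hpval]
    show j ≠ 0
    omega
  have hWmem : vecMulVec (Pi.single p (1:ℝ)) (Pi.single p 1) ∈ FaceU m (Uj m j) := by
    apply FaceU_mem_of_gen (vecMulVec_Sp _)
    rintro v ((hv | hv) | hv)
    · rw [Set.mem_singleton_iff] at hv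
      subst hv
      rw [vecMulVec_mulVec', single_dotProduct, one_mul,
        xv'_other (by rw [hpval]; omega) (by rw [hpval]; omega), zero_smul]
    · obtain ⟨i, hi, rfl⟩ := hv
      have hip : p ≠ i := by
        apply Fin.ne_of_val_ne
        rw [hpval]
        omega
      rw [vecMulVec_mulVec', dotProduct_single, mul_one,
        Pi.single_eq_of_ne (Ne.symm hip), zero_smul]
    · rw [if_neg (by omega)] at hv
      exact absurd hv (Set.notMem_empty _)
  rw [← hEq] at hWmem
  obtain ⟨S, t, hS, hker, ht, heq⟩ := FaceU_cases hWmem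
  have hgmem : (Pi.single p (1:ℝ)) ∈ genSet m (j-1) :=
    Or.inl (Or.inr ⟨p, by rw [hpval]; omega, rfl⟩)
  have h1 : (vecMulVec (Pi.single p (1:ℝ)) (Pi.single p 1)).mulVec (Pi.single p 1)
      = S.mulVec (Pi.single p 1) + t • ((Jmat m).mulVec (Pi.single p 1)) := by
    rw [heq, add_mulVec, smul_mulVec]
  rw [hker _ hgmem, zero_add, J_mulVec_single p hp0, vecMulVec_mulVec'] at h1
  have hww : (Pi.single p 1 : Fin (m+1) → ℝ) ⬝ᵥ (Pi.single p 1 : Fin (m+1) → ℝ) = 1 := by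
    rw [dotProduct_single, mul_one, Pi.single_eq_same]
  rw [hww, one_smul] at h1
  have h2 := congrFun h1 p
  simp only [Pi.smul_apply, smul_eq_mul] at h2
  rw [Pi.single_eq_same] at h2
  linarith

lemma steplast (hm : 1 ≤ m) : FaceU m (Uj m m) < COPset (soc m) := by
  apply lt_of_le_of_ne (FaceU_subset_COP _)
  intro hEq
  have hE : vecMulVec (Pi.single (0:Fin (m+1)) (1:ℝ)) (Pi.single 0 1) ∈ COPset (soc m) :=
    Sp_subset_COP (vecMulVec_Sp _)
  rw [← hEq] at hE
  obtain ⟨S, t, hS, hker, ht, heq⟩ := FaceU_cases hE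
  have h1 : (vecMulVec (Pi.single (0:Fin (m+1)) (1:ℝ)) (Pi.single 0 1)).mulVec (xv' m)
      = S.mulVec (xv' m) + t • ((Jmat m).mulVec (xv' m)) := by
    rw [heq, add_mulVec, smul_mulVec]
  rw [hker _ (xv'_mem_genSet m), zero_add, J_mulVec_xv' hm, vecMulVec_mulVec'] at h1
  have hd : (Pi.single 0 1 : Fin (m+1) → ℝ) ⬝ᵥ xv' m = 1 := by
    rw [single_dotProduct, one_mul, xv'_zero_val]
  rw [hd, one_smul] at h1
  have e1 := congrFun h1 ⟨1, by omega⟩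
  simp only [Pi.smul_apply, smul_eq_mul] at e1
  rw [Pi.single_eq_of_ne (by
      apply Fin.ne_of_val_ne
      show (1:ℕ) ≠ 0
      omega), xv_one_val hm] at e1
  have e0 := congrFun h1 0
  simp only [Pi.smul_apply, smul_eq_mul] at e0
  rw [Pi.single_eq_same, xv_zero_val] at e0
  rw [mul_one] at e1 e0
  rw [← e1] at e0
  norm_num at e0

def chainF (m : ℕ) : Fin (m+3) → Set (Matrix (Fin (m+1)) (Fin (m+1)) ℝ) := fun k =>
  if (k:ℕ) = 0 then {0}
  else if (k:ℕ) ≤ m + 1 then FaceU m (Uj m ((k:ℕ) - 1))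
  else COPset (soc m)

lemma chainF_face (hm : 1 ≤ m) (k : Fin (m+3)) :
    IsFaceOf (COPset (soc m)) (chainF m k) := by
  unfold chainF
  by_cases h0 : (k:ℕ) = 0
  · rw [if_pos h0]; exact zero_isFace hm
  · rw [if_neg h0]
    by_cases h1 : (k:ℕ) ≤ m+1
    · rw [if_pos h1]; exact FaceU_isFace hm _ (xv'_mem_Uj _)
    · rw [if_neg h1]; exact COP_isFace

lemma chainF_mono (hm : 1 ≤ m) : StrictMono (chainF m) := by
  rw [Fin.strictMono_iff_lt_succ]
  intro i
  by_cases h0 : (i:ℕ) = 0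
  · show chainF m i.castSucc < chainF m i.succ
    unfold chainF
    rw [Fin.coe_castSucc, Fin.val_succ]
    rw [if_pos h0, if_neg (by omega), if_pos (by omega)]
    have e : (i:ℕ) + 1 - 1 = 0 := by omega
    rw [e]
    exact step0 hm
  · by_cases h1 : (i:ℕ) ≤ m
    · show chainF m i.castSucc < chainF m i.succ
      unfold chainF
      rw [Fin.coe_castSucc, Fin.val_succ]
      rw [if_neg h0, if_pos (by omega), if_neg (by omega), if_pos (by omega)]
      have e : (i:ℕ) + 1 - 1 = (i:ℕ) := by omega
      rw [e]
      by_cases h2 : (i:ℕ) = 1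
      · rw [h2]
        show FaceU m (Uj m 0) < FaceU m (Uj m 1)
        exact step1 hm
      · exact stepj hm (i:ℕ) (by omega) h1
    · have him : (i:ℕ) = m + 1 := by have := i.isLt; omega
      show chainF m i.castSucc < chainF m i.succ
      unfold chainF
      rw [Fin.coe_castSucc, Fin.val_succ]
      rw [if_neg h0, if_pos (by omega), if_neg (by omega), if_neg (by omega)]
      have e : (i:ℕ) - 1 = m := by omega
      rw [e]
      exact steplast hm

end St8
end

/-- the length of a longest chain of faces of `COP(Lⁿ)` is `n + 2`
(here `n = m + 1 ≥ 2`, so `n + 2 = m + 3`). -/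
theorem stmt8 (m : ℕ) (hm : 1 ≤ m) :
    (∃ F : Fin (m + 3) → Set (Matrix (Fin (m+1)) (Fin (m+1)) ℝ),
        StrictMono F ∧ ∀ i, IsFaceOf (COPset (soc m)) (F i)) ∧
    (∀ (l : ℕ) (F : Fin l → Set (Matrix (Fin (m+1)) (Fin (m+1)) ℝ)),
        StrictMono F → (∀ i, IsFaceOf (COPset (soc m)) (F i)) → l ≤ m + 3) := by
  constructor
  · exact ⟨St8.chainF m, St8.chainF_mono hm, fun k => St8.chainF_face hm k⟩
  · intro l F h1 h2
    exact St8.chain_bound hm l F h1 h2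
end
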